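/- arXiv:2412.07510 — 12 statements merged into one kernel-verified Lean document; each statement's English description precedes it below -/
import Mathlib

section
/- Let S be a finite commutative local ring with identity whose maximal ideal is principal, and suppose S has at least two nonzero zero-divisors. Then the Roman domination number of the zero-divisor graph of S equals 2, i.e., γ_R(Γ(S)) = 2. -/
/-- The set of nonzero zero-divisors of a commutative ring `R`. -/
def zdvSet (R : Type*) [CommRing R] : Set R :=
  {x | x ≠ 0 ∧ ∃ y, y ≠ 0 ∧ x * y = 0}

/-- The zero-divisor graph `Γ(R)`: vertices are the nonzero zero-divisors of `R`,
with distinct `x`, `y` adjacent iff `x * y = 0`. -/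
def zeroDivisorGraph (R : Type*) [CommRing R] : SimpleGraph (zdvSet R) where
  Adj a b := a ≠ b ∧ (a : R) * (b : R) = 0
  symm := by
    constructor
    rintro a b ⟨hne, hmul⟩
    exact ⟨hne.symm, by rwa [mul_comm]⟩
  loopless := by constructor; rintro a ⟨hne, _⟩; exact hne rfl

/-- A Roman dominating function: every vertex with value `0` has a neighbour
with value `2`. -/
def IsRomanDominating {V : Type*} (G : SimpleGraph V) (f : V → Fin 3) : Prop :=
  ∀ u, f u = 0 → ∃ v, G.Adj u v ∧ f v = 2

/-- The Roman domination number: the minimum weight of a (finitely supported)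
Roman dominating function. -/
noncomputable def romanDominationNumber {V : Type*} (G : SimpleGraph V) : ℕ :=
  sInf {w | ∃ f : V → Fin 3, IsRomanDominating G f ∧
    {v | f v ≠ 0}.Finite ∧ w = ∑ᶠ v, (f v : ℕ)}

/-- a finite commutative local ring with principal maximal ideal and
at least two nonzero zero-divisors has Roman domination number 2 for its
zero-divisor graph. -/
theorem stmt_0 (S : Type*) [CommRing S] [IsLocalRing S] [Finite S]
    (hprin : (IsLocalRing.maximalIdeal S).IsPrincipal)
    (htwo : ∃ a b : S, a ≠ b ∧ a ∈ zdvSet S ∧ b ∈ zdvSet S) :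
    romanDominationNumber (zeroDivisorGraph S) = 2 := by
  classical
  obtain ⟨p, hp⟩ := hprin
  -- every nonunit is a multiple of p
  have hmul_p : ∀ x : S, ¬ IsUnit x → ∃ c, x = c * p := by
    intro x hx
    have : x ∈ IsLocalRing.maximalIdeal S := (IsLocalRing.mem_maximalIdeal x).2 hx
    rw [hp, Submodule.mem_span_singleton] at this
    obtain ⟨c, hc⟩ := this
    exact ⟨c, by rw [← hc]; simp [smul_eq_mul]⟩
  -- zero divisors are nonunits
  have hzd_nonunit : ∀ x : S, x ∈ zdvSet S → ¬ IsUnit x := by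
    rintro x ⟨hx0, y, hy0, hxy⟩ hu
    exact hy0 ((hu.mul_right_eq_zero).mp hxy)
  -- p is not a unit
  have hp_nonunit : ¬ IsUnit p := by
    intro h
    have hpm : p ∈ IsLocalRing.maximalIdeal S := by
      rw [hp]; exact Submodule.mem_span_singleton_self p
    exact (IsLocalRing.maximalIdeal.isMaximal S).ne_top
      (Ideal.eq_top_of_isUnit_mem _ hpm h)
  -- p ≠ 0
  have hp0 : p ≠ 0 := by
    intro h
    obtain ⟨a, b, hab, ha, hb⟩ := htwo
    obtain ⟨c, hc⟩ := hmul_p a (hzd_nonunit a ha)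
    exact ha.1 (by rw [hc, h, mul_zero])
  -- p is nilpotent
  have hnil : ∃ n, p ^ n = 0 := by
    obtain ⟨a, b, hne, hab⟩ := Finite.exists_ne_map_eq_of_infinite (fun n : ℕ => p ^ n)
    have key : ∀ a b : ℕ, a < b → p ^ a = p ^ b → ∃ n, p ^ n = 0 := by
      intro a b hlt heq
      refine ⟨a, ?_⟩
      have hmem : p ^ (b - a) ∈ nonunits S := by
        intro hu
        exact hp_nonunit ((isUnit_pow_iff (by omega : b - a ≠ 0)).mp hu)
      have hu : IsUnit (1 - p ^ (b - a)) :=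
        IsLocalRing.isUnit_one_sub_self_of_mem_nonunits _ hmem
      have h0 : p ^ a * (1 - p ^ (b - a)) = 0 := by
        rw [mul_sub, mul_one, ← pow_add, show a + (b - a) = b by omega, ← heq, sub_self]
      exact hu.mul_left_eq_zero.mp h0
    rcases lt_or_gt_of_ne hne with h | h
    · exact key _ _ h hab
    · exact key _ _ h hab.symm
  set n := Nat.find hnil with hn_def
  have hpn : p ^ n = 0 := Nat.find_spec hnil
  have hn1 : 1 ≤ n := by
    rcases Nat.eq_zero_or_pos n with h | h
    · exfalso; rw [h, pow_zero] at hpn; exact one_ne_zero hpn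
    · exact h
  have hn2 : 2 ≤ n := by
    rcases Nat.lt_or_ge n 2 with h | h
    · interval_cases n
      · exfalso; rw [pow_one] at hpn; exact hp0 hpn
    · exact h
  have hq0 : p ^ (n - 1) ≠ 0 := Nat.find_min hnil (by omega)
  have hqp : p ^ (n - 1) * p = 0 := by
    rw [← pow_succ, show n - 1 + 1 = n by omega]; exact hpn
  -- the dominating vertex
  have hqmem : p ^ (n - 1) ∈ zdvSet S := ⟨hq0, p, hp0, hqp⟩
  set v₀ : zdvSet S := ⟨p ^ (n - 1), hqmem⟩ with hv₀
  -- every zero divisor kills q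
  have hkill : ∀ x : S, x ∈ zdvSet S → x * p ^ (n - 1) = 0 := by
    intro x hx
    obtain ⟨c, hc⟩ := hmul_p x (hzd_nonunit x hx)
    rw [hc, mul_assoc, mul_comm p, hqp, mul_zero]
  -- finiteness / Fintype on the vertex set
  have : Finite (zdvSet S) := Subtype.finite
  have := Fintype.ofFinite (zdvSet S)
  -- the witness function
  set f : zdvSet S → Fin 3 := fun v => if v = v₀ then 2 else 0 with hf
  have hdom : IsRomanDominating (zeroDivisorGraph S) f := by
    intro u hu
    have hune : u ≠ v₀ := by
      intro h; rw [hf] at hu; simp [h] at hu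
    refine ⟨v₀, ⟨hune, ?_⟩, by simp [hf]⟩
    exact hkill (u : S) u.2
  have hsum : ∑ᶠ v, (f v : ℕ) = 2 := by
    rw [finsum_eq_single _ v₀ (by intro x hx; simp [hf, hx])]
    simp [hf]
  -- 2 is in the set
  have h2mem : 2 ∈ {w | ∃ f : zdvSet S → Fin 3,
      IsRomanDominating (zeroDivisorGraph S) f ∧ {v | f v ≠ 0}.Finite ∧ w = ∑ᶠ v, (f v : ℕ)} :=
    ⟨f, hdom, Set.toFinite _, hsum.symm⟩
  -- lower bound: every element of the set is ≥ 2
  have hlb : ∀ w ∈ {w | ∃ f : zdvSet S → Fin 3,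
      IsRomanDominating (zeroDivisorGraph S) f ∧ {v | f v ≠ 0}.Finite ∧ w = ∑ᶠ v, (f v : ℕ)},
      2 ≤ w := by
    rintro w ⟨g, hgdom, -, rfl⟩
    rw [finsum_eq_sum_of_fintype]
    obtain ⟨a, b, hab, ha, hb⟩ := htwo
    set va : zdvSet S := ⟨a, ha⟩
    set vb : zdvSet S := ⟨b, hb⟩
    by_cases h2 : ∃ v, g v = 2
    · obtain ⟨v, hv⟩ := h2
      calc 2 = ((g v : ℕ)) := by rw [hv]; rfl
        _ ≤ ∑ u, (g u : ℕ) := Finset.single_le_sum (f := fun u : zdvSet S => (g u : ℕ))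
            (fun i _ => Nat.zero_le _) (Finset.mem_univ v)
    · push_neg at h2
      have hga : g va ≠ 0 := by
        intro h
        obtain ⟨v, -, hv2⟩ := hgdom va h
        exact h2 v hv2
      have hgb : g vb ≠ 0 := by
        intro h
        obtain ⟨v, -, hv2⟩ := hgdom vb h
        exact h2 v hv2
      have hvab : va ≠ vb := by
        intro h; exact hab (congrArg Subtype.val h)
      calc 2 = 1 + 1 := rfl
        _ ≤ (g va : ℕ) + (g vb : ℕ) := by
            have h1 : 1 ≤ (g va : ℕ) := Nat.one_le_iff_ne_zero.2
              (fun h => hga (Fin.ext (by simpa using h)))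
            have h2 : 1 ≤ (g vb : ℕ) := Nat.one_le_iff_ne_zero.2
              (fun h => hgb (Fin.ext (by simpa using h)))
            omega
        _ = ∑ u ∈ ({va, vb} : Finset (zdvSet S)), (g u : ℕ) := (Finset.sum_pair (f := fun u : zdvSet S => (g u : ℕ)) hvab).symm
        _ ≤ ∑ u, (g u : ℕ) := Finset.sum_le_sum_of_subset (Finset.subset_univ _)
  exact le_antisymm (Nat.sInf_le h2mem) (le_csInf ⟨2, h2mem⟩ hlb)
end

section
/- Let R₁ and R₂ be nontrivial commutative rings with identity, each having at most one nonzero zero-divisor (so each Γ(Rᵢ) has diameter 0), and suppose |R₁| ≥ 5 and |R₂| ≥ 5. Then γ_R(Γ(R₁ × R₂)) = 4. -/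
lemma fin3_val_ne_zero {a : Fin 3} (h : a ≠ 0) : (a : ℕ) ≠ 0 := by
  intro h'; exact h (Fin.ext h')

/-- If `R` has at most one nonzero zero-divisor and `|R| ≥ 5`, then `R` is a domain. -/
lemma no_zdv {R : Type*} [CommRing R] (h : (zdvSet R).Subsingleton)
    (hc : (5 : Cardinal) ≤ Cardinal.mk R) {a b : R} (hab : a * b = 0) :
    a = 0 ∨ b = 0 := by
  by_contra hcon
  push_neg at hcon
  obtain ⟨ha, hb⟩ := hcon
  have haz : a ∈ zdvSet R := ⟨ha, b, hb, hab⟩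
  have hbz : b ∈ zdvSet R := ⟨hb, a, ha, by rwa [mul_comm]⟩
  have hba : b = a := h hbz haz
  rw [hba] at hab
  have key : ∀ r : R, r = 0 ∨ r = a ∨ r = 1 ∨ r = 1 + a := by
    intro r
    rcases eq_or_ne (r * a) 0 with h0 | h0
    · rcases eq_or_ne r 0 with hr | hr
      · exact Or.inl hr
      · exact Or.inr (Or.inl (h ⟨hr, a, ha, h0⟩ haz))
    · have hra : r * a = a := h ⟨h0, a, ha, by rw [mul_assoc, hab, mul_zero]⟩ haz
      have hsub : (r - 1) * a = 0 := by rw [sub_mul, one_mul, hra, sub_self]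
      rcases eq_or_ne (r - 1) 0 with hr | hr
      · exact Or.inr (Or.inr (Or.inl (by linear_combination hr)))
      · have := h ⟨hr, a, ha, hsub⟩ haz
        exact Or.inr (Or.inr (Or.inr (by linear_combination this)))
  have hsurj : Function.Surjective (fun i : ULift.{_} (Fin 4) => ![0, a, 1, 1 + a] i.down) := by
    intro r
    rcases key r with h | h | h | h
    · exact ⟨⟨0⟩, by simp [h]⟩
    · exact ⟨⟨1⟩, by simp [h]⟩
    · exact ⟨⟨2⟩, by simp [h]⟩
    · exact ⟨⟨3⟩, by simp [h]⟩
  have hle : Cardinal.mk R ≤ ((4 : ℕ) : Cardinal) := by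
    have h4 := Cardinal.mk_le_of_surjective hsurj
    rw [Cardinal.mk_fintype (ULift (Fin 4))] at h4
    simpa using h4
  have : (5 : ℕ) ≤ (4 : ℕ) := by exact_mod_cast hc.trans hle
  omega

lemma finset_sum_le_finsum {V : Type*} (f : V → Fin 3) (hfin : {v : V | f v ≠ 0}.Finite)
    (T : Finset V) (hT : ∀ v ∈ T, f v ≠ 0) :
    ∑ v ∈ T, ((f v : ℕ)) ≤ ∑ᶠ v, ((f v : ℕ)) := by
  have hs : Function.support (fun v => ((f v : ℕ))) = {v | f v ≠ 0} := by
    ext v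
    simp only [Function.mem_support, Set.mem_setOf_eq]
    exact ⟨fun h h' => h (by rw [h']; rfl), fun h h' => h (Fin.ext h')⟩
  have hfin' : (Function.support fun v => ((f v : ℕ))).Finite := hs ▸ hfin
  rw [finsum_eq_sum _ hfin']
  apply Finset.sum_le_sum_of_subset
  intro v hv
  rw [Set.Finite.mem_toFinset, hs]
  exact hT v hv

lemma card_le_finset_sum {V : Type*} (f : V → Fin 3) (T : Finset V)
    (hT : ∀ v ∈ T, f v ≠ 0) : T.card ≤ ∑ v ∈ T, ((f v : ℕ)) := by
  have := Finset.card_nsmul_le_sum T (fun v => ((f v : ℕ))) 1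
    (fun x hx => Nat.one_le_iff_ne_zero.2 (fin3_val_ne_zero (hT x hx)))
  simpa using this

lemma four_le_finsum_of_side {R V : Type*} [CommRing R]
    (hc : (5 : Cardinal) ≤ Cardinal.mk R)
    (f : V → Fin 3) (hfin : {v : V | f v ≠ 0}.Finite)
    (ι : {a : R // a ≠ 0} → V) (hinj : Function.Injective ι)
    (hιne : ∀ a, f (ι a) ≠ 0) : 4 ≤ ∑ᶠ v, ((f v : ℕ)) := by
  classical
  obtain ⟨p, hp⟩ := Cardinal.le_mk_iff_exists_set.1 hc
  have hp' : Cardinal.mk p = ((5 : ℕ) : Cardinal) := by rw [hp]; norm_num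
  obtain ⟨s, -, hscard⟩ := Cardinal.mk_set_eq_nat_iff_finset.1 hp'
  set t := s.erase 0 with ht
  have htcard : 4 ≤ t.card := by
    have := Finset.pred_card_le_card_erase (s := s) (a := (0 : R))
    rw [← ht] at this
    omega
  set ι' : {x // x ∈ t} → V := fun x => ι ⟨x.1, Finset.ne_of_mem_erase x.2⟩ with hι'
  have hinj' : Function.Injective ι' := by
    intro x y hxy
    have h2 := hinj hxy
    rw [Subtype.mk.injEq] at h2
    exact Subtype.ext h2
  set T : Finset V := t.attach.image ι' with hT
  have hTcard : T.card = t.card := by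
    rw [hT, Finset.card_image_of_injective _ hinj', Finset.card_attach]
  have hTne : ∀ v ∈ T, f v ≠ 0 := by
    intro v hv
    rw [hT, Finset.mem_image] at hv
    obtain ⟨x, _, rfl⟩ := hv
    exact hιne _
  calc (4 : ℕ) ≤ t.card := htcard
    _ = T.card := hTcard.symm
    _ ≤ ∑ v ∈ T, ((f v : ℕ)) := card_le_finset_sum f T hTne
    _ ≤ ∑ᶠ v, ((f v : ℕ)) := finset_sum_le_finsum f hfin T hTne

theorem stmt_1 (R₁ R₂ : Type*) [CommRing R₁] [CommRing R₂]
    [Nontrivial R₁] [Nontrivial R₂]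
    (h₁ : (zdvSet R₁).Subsingleton) (h₂ : (zdvSet R₂).Subsingleton)
    (hc₁ : (5 : Cardinal) ≤ Cardinal.mk R₁) (hc₂ : (5 : Cardinal) ≤ Cardinal.mk R₂) :
    romanDominationNumber (zeroDivisorGraph (R₁ × R₂)) = 4 := by
  classical
  have d₁ : ∀ a b : R₁, a * b = 0 → a = 0 ∨ b = 0 := fun a b h => no_zdv h₁ hc₁ h
  have d₂ : ∀ a b : R₂, a * b = 0 → a = 0 ∨ b = 0 := fun a b h => no_zdv h₂ hc₂ h
  have lmem : ∀ a : R₁, a ≠ 0 → ((a, (0 : R₂)) ∈ zdvSet (R₁ × R₂)) := by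
    intro a ha
    exact ⟨by simp [Prod.ext_iff, ha], ((0 : R₁), (1 : R₂)), by simp [Prod.ext_iff],
      by simp [Prod.ext_iff]⟩
  have rmem : ∀ b : R₂, b ≠ 0 → (((0 : R₁), b) ∈ zdvSet (R₁ × R₂)) := by
    intro b hb
    exact ⟨by simp [Prod.ext_iff, hb], ((1 : R₁), (0 : R₂)), by simp [Prod.ext_iff],
      by simp [Prod.ext_iff]⟩
  set v10 : ↥(zdvSet (R₁ × R₂)) := ⟨((1 : R₁), (0 : R₂)), lmem 1 one_ne_zero⟩ with hv10
  set v01 : ↥(zdvSet (R₁ × R₂)) := ⟨((0 : R₁), (1 : R₂)), rmem 1 one_ne_zero⟩ with hv01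
  have hv_ne : v10 ≠ v01 := by
    simp [hv10, hv01, Subtype.ext_iff, Prod.ext_iff]
  -- membership of 4 in the weight set
  have hmem : 4 ∈ {w | ∃ f : ↥(zdvSet (R₁ × R₂)) → Fin 3,
      IsRomanDominating (zeroDivisorGraph (R₁ × R₂)) f ∧
      {v | f v ≠ 0}.Finite ∧ w = ∑ᶠ v, (f v : ℕ)} := by
    refine ⟨fun v => if v = v10 ∨ v = v01 then 2 else 0, ?_, ?_, ?_⟩
    · intro u hu
      have hu0 : (if u = v10 ∨ u = v01 then (2 : Fin 3) else 0) = 0 := hu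
      have hu' : ¬(u = v10 ∨ u = v01) := by
        intro hor
        rw [if_pos hor] at hu0
        exact absurd hu0 (by decide)
      push_neg at hu'
      obtain ⟨hne0, q, hq0, hpq⟩ := u.2
      have h1 : (u : R₁ × R₂).1 * q.1 = 0 := by
        have := congrArg Prod.fst hpq; simpa using this
      have h2 : (u : R₁ × R₂).2 * q.2 = 0 := by
        have := congrArg Prod.snd hpq; simpa using this
      rcases eq_or_ne q.1 0 with hq1 | hq1
      · -- then q.2 ≠ 0, so u.2 = 0, u.1 ≠ 0 : use v01
        have hq2 : q.2 ≠ 0 := fun h => hq0 (Prod.ext hq1 h)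
        have hu2 : (u : R₁ × R₂).2 = 0 := (d₂ _ _ h2).resolve_right hq2
        refine ⟨v01, ⟨hu'.2, ?_⟩, by simp⟩
        apply Prod.ext <;> simp [hu2, hv01]
      · -- u.1 = 0 : use v10
        have hu1 : (u : R₁ × R₂).1 = 0 := (d₁ _ _ h1).resolve_right hq1
        refine ⟨v10, ⟨hu'.1, ?_⟩, by simp [hv_ne]⟩
        apply Prod.ext <;> simp [hu1, hv10]
    · apply Set.Finite.subset ((Set.finite_singleton v01).insert v10)
      intro v hv
      simp only [Set.mem_setOf_eq] at hv
      have : v = v10 ∨ v = v01 := by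
        by_contra hcon
        exact hv (if_neg hcon)
      simpa [Set.mem_insert_iff] using this
    · have hsupp : (Function.support fun v =>
          (((if v = v10 ∨ v = v01 then (2 : Fin 3) else 0) : Fin 3) : ℕ)) ⊆
          (({v10, v01} : Finset ↥(zdvSet (R₁ × R₂))) : Set _) := by
        intro v hv
        simp only [Function.mem_support] at hv
        by_contra hcon
        simp only [Finset.coe_insert, Finset.coe_singleton, Set.mem_insert_iff,
          Set.mem_singleton_iff] at hcon
        push_neg at hcon
        rw [if_neg (by tauto)] at hv
        exact hv rfl
      rw [finsum_eq_finset_sum_of_support_subset _ hsupp, Finset.sum_pair hv_ne]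
      simp [hv_ne]
  refine le_antisymm (Nat.sInf_le hmem) (le_csInf ⟨4, hmem⟩ ?_)
  rintro w ⟨f, hdom, hfin, rfl⟩
  by_cases hPR : ∃ v : ↥(zdvSet (R₁ × R₂)), (v : R₁ × R₂).1 = 0 ∧ f v = 2
  · by_cases hPL : ∃ v : ↥(zdvSet (R₁ × R₂)), (v : R₁ × R₂).2 = 0 ∧ f v = 2
    · -- both sides have a 2
      obtain ⟨vR, hR0, hR2⟩ := hPR
      obtain ⟨vL, hL0, hL2⟩ := hPL
      have hLR : vL ≠ vR := by
        intro h
        have h1 : (vL : R₁ × R₂) = 0 := by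
          rw [h] at hL0 ⊢
          exact Prod.ext hR0 hL0
        exact vL.2.1 h1
      have h4 : (4 : ℕ) = ∑ v ∈ ({vL, vR} : Finset _), ((f v : ℕ)) := by
        rw [Finset.sum_pair hLR, hL2, hR2]
        decide
      rw [h4]
      exact finset_sum_le_finsum f hfin _ (by
        intro v hv
        rcases Finset.mem_insert.1 hv with h | h
        · rw [h, hL2]; decide
        · rw [Finset.mem_singleton.1 h, hR2]; decide)
    · -- no "left" vertex (second coordinate 0) has value 2:
      -- then every right vertex ⟨(0,b)⟩ has nonzero value
      refine four_le_finsum_of_side hc₂ f hfin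
        (fun b => ⟨((0 : R₁), b.1), rmem b.1 b.2⟩) ?_ ?_
      · intro x y hxy
        simp only [Subtype.mk.injEq, Prod.mk.injEq] at hxy
        exact Subtype.ext hxy.2
      · intro b hb0
        obtain ⟨v', hadj, hv'2⟩ := hdom _ hb0
        have hmul : ((0 : R₁), b.1) * (v' : R₁ × R₂) = 0 := hadj.2
        have h2 : b.1 * (v' : R₁ × R₂).2 = 0 := by
          have := congrArg Prod.snd hmul; simpa using this
        have hv'snd : (v' : R₁ × R₂).2 = 0 := (d₂ _ _ h2).resolve_left b.2
        exact hPL ⟨v', hv'snd, hv'2⟩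
  · -- no "right" vertex (first coordinate 0) has value 2:
    -- then every left vertex ⟨(a,0)⟩ has nonzero value
    refine four_le_finsum_of_side hc₁ f hfin
      (fun a => ⟨(a.1, (0 : R₂)), lmem a.1 a.2⟩) ?_ ?_
    · intro x y hxy
      simp only [Subtype.mk.injEq, Prod.mk.injEq] at hxy
      exact Subtype.ext hxy.1
    · intro a ha0
      obtain ⟨v', hadj, hv'2⟩ := hdom _ ha0
      have hmul : (a.1, (0 : R₂)) * (v' : R₁ × R₂) = 0 := hadj.2
      have h1 : a.1 * (v' : R₁ × R₂).1 = 0 := by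
        have := congrArg Prod.fst hmul; simpa using this
      have hv'fst : (v' : R₁ × R₂).1 = 0 := (d₁ _ _ h1).resolve_left a.2
      exact hPR ⟨v', hv'fst, hv'2⟩
end

section
/- Let R₁ be a nontrivial commutative ring with identity having at most one nonzero zero-divisor (so Γ(R₁) has diameter 0), and let R₂ be a commutative ring with identity having at least two nonzero zero-divisors such that xy = 0 for all zero-divisors x, y of R₂ (so Γ(R₂) is complete and has diameter 1). Then γ_R(Γ(R₁ × R₂)) = 4. -/
theorem stmt_2 (R₁ R₂ : Type*) [CommRing R₁] [CommRing R₂] [Nontrivial R₁]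
    (h₁ : (zdvSet R₁).Subsingleton)
    (h₂ : ∃ a b : R₂, a ≠ b ∧ a ∈ zdvSet R₂ ∧ b ∈ zdvSet R₂)
    (hcomplete : ∀ x ∈ zdvSet R₂, ∀ y ∈ zdvSet R₂, x * y = 0) :
    romanDominationNumber (zeroDivisorGraph (R₁ × R₂)) = 4 := by
  classical
  obtain ⟨a, b, hab, ha, hb⟩ := h₂
  have ha0 : a ≠ 0 := ha.1
  have hb0 : b ≠ 0 := hb.1
  have haa : a * a = 0 := hcomplete a ha a ha
  have hbb : b * b = 0 := hcomplete b hb b hb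
  have h10 : (1 : R₂) ≠ 0 := fun h => ha0 (by rw [← mul_one a, h, mul_zero])
  have hrega : ∀ y : R₂, y * (1 + a) = 0 → y = 0 := fun y h => by
    linear_combination (1 - a) * h + y * haa
  have hregb : ∀ y : R₂, y * (1 + b) = 0 → y = 0 := fun y h => by
    linear_combination (1 - b) * h + y * hbb
  have h1a0 : (1 : R₂) + a ≠ 0 := fun h => h10 (hrega 1 (by rw [h, mul_zero]))
  have h1b0 : (1 : R₂) + b ≠ 0 := fun h => h10 (hregb 1 (by rw [h, mul_zero]))
  -- membership lemmas
  have mem1 : ∀ u : R₁, u ≠ 0 → ((u, (0 : R₂)) : R₁ × R₂) ∈ zdvSet (R₁ × R₂) := by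
    intro u hu
    exact ⟨by simp [Prod.ext_iff, hu], ((0 : R₁), (1 : R₂)),
      by simp [Prod.ext_iff, h10], by simp [Prod.ext_iff]⟩
  have mem2 : ∀ v : R₂, v ≠ 0 → (((0 : R₁), v) : R₁ × R₂) ∈ zdvSet (R₁ × R₂) := by
    intro v hv
    exact ⟨by simp [Prod.ext_iff, hv], ((1 : R₁), (0 : R₂)),
      by simp [Prod.ext_iff], by simp [Prod.ext_iff]⟩
  have mem3 : ∀ (u : R₁) (v : R₂), v ∈ zdvSet R₂ → ((u, v) : R₁ × R₂) ∈ zdvSet (R₁ × R₂) := by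
    intro u v hv
    refine ⟨by simp [Prod.ext_iff, hv.1], ((0 : R₁), a),
      by simp [Prod.ext_iff, ha0], ?_⟩
    simp [Prod.ext_iff, hcomplete v hv a ha]
  -- the element c of R₁
  obtain ⟨c, hc0, hc⟩ : ∃ c : R₁, c ≠ 0 ∧ ∀ u ∈ zdvSet R₁, c * u = 0 := by
    by_cases h : (zdvSet R₁).Nonempty
    · obtain ⟨x, hx⟩ := h
      obtain ⟨hx0, y, hy0, hxy⟩ := hx
      have hy : y ∈ zdvSet R₁ := ⟨hy0, x, hx0, by rwa [mul_comm]⟩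
      have hyx : y = x := h₁ hy ⟨hx0, y, hy0, hxy⟩
      have hxx : x * x = 0 := by rw [← hyx] at hxy; rw [← hyx]; exact hxy
      refine ⟨x, hx0, fun u hu => ?_⟩
      rw [h₁ hu ⟨hx0, y, hy0, hxy⟩]
      rw [← hyx] at hxx; rw [← hyx]; exact hxx
    · exact ⟨1, one_ne_zero, fun u hu => absurd ⟨u, hu⟩ h⟩
  set V := ↥(zdvSet (R₁ × R₂)) with hV
  set G := zeroDivisorGraph (R₁ × R₂) with hG
  -- helper: distinct pairs give distinct vertices
  have subne : ∀ {p q : R₁ × R₂} (hp : p ∈ zdvSet (R₁ × R₂)) (hq : q ∈ zdvSet (R₁ × R₂)),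
      p ≠ q → (⟨p, hp⟩ : V) ≠ ⟨q, hq⟩ :=
    fun _ _ h hh => h (congrArg Subtype.val hh)
  have pairne1 : ∀ (x x' : R₁) (y y' : R₂), x ≠ x' → ((x, y) : R₁ × R₂) ≠ (x', y') :=
    fun _ _ _ _ h hh => h (congrArg Prod.fst hh)
  have pairne2 : ∀ (x x' : R₁) (y y' : R₂), y ≠ y' → ((x, y) : R₁ × R₂) ≠ (x', y') :=
    fun _ _ _ _ h hh => h (congrArg Prod.snd hh)
  -- the two special vertices
  let P : V := ⟨(c, (0 : R₂)), mem1 c hc0⟩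
  let Q : V := ⟨((0 : R₁), b), mem2 b hb0⟩
  have hPQ : P ≠ Q := subne _ _ (pairne1 _ _ _ _ hc0)
  let f₀ : V → Fin 3 := fun v => if v = P then 2 else if v = Q then 2 else 0
  have hf₀P : f₀ P = 2 := by simp [f₀]
  have hf₀Q : f₀ Q = 2 := by simp [f₀, hPQ.symm]
  have hf₀RD : IsRomanDominating G f₀ := by
    intro u hu0
    have huP : u ≠ P := fun h => by simp [h, hf₀P] at hu0
    have huQ : u ≠ Q := fun h => by simp [h, hf₀Q] at hu0
    obtain ⟨⟨u₁, u₂⟩, hune, ⟨y₁, y₂⟩, hy0, huy⟩ := u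
    rw [Prod.mk_mul_mk, Prod.mk.injEq] at huy
    obtain ⟨hy1, hy2⟩ := huy
    by_cases hu1 : u₁ = 0
    · -- adjacent to P
      refine ⟨P, ⟨huP, ?_⟩, hf₀P⟩
      show ((u₁, u₂) : R₁ × R₂) * (c, (0 : R₂)) = 0
      rw [Prod.mk_mul_mk, hu1, zero_mul, mul_zero]
      rfl
    · by_cases hcase : y₁ = 0
      · -- then u₂ * b = 0, adjacent to Q
        have hy20 : y₂ ≠ 0 := fun h => hy0 (by rw [hcase, h]; rfl)
        have hu2b : u₂ * b = 0 := by
          by_cases hu2 : u₂ = 0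
          · rw [hu2, zero_mul]
          · exact hcomplete u₂ ⟨hu2, y₂, hy20, hy2⟩ b hb
        refine ⟨Q, ⟨huQ, ?_⟩, hf₀Q⟩
        show ((u₁, u₂) : R₁ × R₂) * ((0 : R₁), b) = 0
        rw [Prod.mk_mul_mk, mul_zero, hu2b]
        rfl
      · -- u₁ is a zero divisor, adjacent to P
        have hu1z : u₁ ∈ zdvSet R₁ := ⟨hu1, y₁, hcase, hy1⟩
        refine ⟨P, ⟨huP, ?_⟩, hf₀P⟩
        show ((u₁, u₂) : R₁ × R₂) * (c, (0 : R₂)) = 0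
        rw [Prod.mk_mul_mk, mul_comm u₁ c, hc u₁ hu1z, mul_zero]
        rfl
  have hf₀supp : {v : V | f₀ v ≠ 0} ⊆ {P, Q} := by
    intro v hv
    simp only [f₀, ne_eq, Set.mem_setOf_eq] at hv
    by_cases h1 : v = P
    · exact Or.inl h1
    · by_cases h2 : v = Q
      · exact Or.inr h2
      · simp [h1, h2] at hv
  have hf₀fin : {v : V | f₀ v ≠ 0}.Finite :=
    Set.Finite.subset ((Set.finite_singleton Q).insert P) hf₀supp
  have hweight : ∑ᶠ v, ((f₀ v : ℕ)) = 4 := by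
    have hsub : Function.support (fun v => ((f₀ v : ℕ))) ⊆ (({P, Q} : Finset V) : Set V) := by
      intro v hv
      have h' : f₀ v ≠ 0 := fun h => by simp [Function.mem_support, h] at hv
      have := hf₀supp h'
      simpa using this
    rw [finsum_eq_sum_of_support_subset _ hsub, Finset.sum_pair hPQ, hf₀P, hf₀Q]
    rfl
  have h4mem : 4 ∈ {w | ∃ f : V → Fin 3, IsRomanDominating G f ∧
      {v | f v ≠ 0}.Finite ∧ w = ∑ᶠ v, (f v : ℕ)} :=
    ⟨f₀, hf₀RD, hf₀fin, hweight.symm⟩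
  -- vertices used in the lower bound
  let w₁ : V := ⟨((0 : R₁), (1 : R₂)), mem2 1 h10⟩
  let w₂ : V := ⟨((0 : R₁), 1 + a), mem2 _ h1a0⟩
  let w₃ : V := ⟨((0 : R₁), 1 + b), mem2 _ h1b0⟩
  let w₄ : V := ⟨((1 : R₁), (0 : R₂)), mem1 1 one_ne_zero⟩
  have hw12 : w₁ ≠ w₂ := subne _ _ (pairne2 _ _ _ _ (fun h => ha0 (by linear_combination -h)))
  have hw13 : w₁ ≠ w₃ := subne _ _ (pairne2 _ _ _ _ (fun h => hb0 (by linear_combination -h)))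
  have hw23 : w₂ ≠ w₃ := subne _ _ (pairne2 _ _ _ _ (fun h => hab (by linear_combination h)))
  have hw14 : w₁ ≠ w₄ := subne _ _ (pairne1 _ _ _ _ (fun h => one_ne_zero h.symm))
  have hw24 : w₂ ≠ w₄ := subne _ _ (pairne1 _ _ _ _ (fun h => one_ne_zero h.symm))
  have hw34 : w₃ ≠ w₄ := subne _ _ (pairne1 _ _ _ _ (fun h => one_ne_zero h.symm))
  -- every vertex has two non-neighbours distinct from it
  have hnon : ∀ t : V, ∃ u₁ u₂ : V, u₁ ≠ u₂ ∧ u₁ ≠ t ∧ u₂ ≠ t ∧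
      ¬ G.Adj u₁ t ∧ ¬ G.Adj u₂ t := by
    intro t
    have pick : ∀ z₁ z₂ z₃ : V, z₁ ≠ z₂ → z₁ ≠ z₃ → z₂ ≠ z₃ →
        ¬ G.Adj z₁ t → ¬ G.Adj z₂ t → ¬ G.Adj z₃ t →
        ∃ u₁ u₂ : V, u₁ ≠ u₂ ∧ u₁ ≠ t ∧ u₂ ≠ t ∧ ¬ G.Adj u₁ t ∧ ¬ G.Adj u₂ t := by
      intro z₁ z₂ z₃ h12 h13 h23 hn1 hn2 hn3
      by_cases e1 : z₁ = t
      · subst e1; exact ⟨z₂, z₃, h23, h12.symm, h13.symm, hn2, hn3⟩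
      · by_cases e2 : z₂ = t
        · subst e2; exact ⟨z₁, z₃, h13, e1, h23.symm, hn1, hn3⟩
        · exact ⟨z₁, z₂, h12, e1, e2, hn1, hn2⟩
    by_cases ht1 : ((t : R₁ × R₂)).1 = 0
    · have ht2 : ((t : R₁ × R₂)).2 ≠ 0 := fun h =>
        t.2.1 (Prod.ext_iff.2 ⟨ht1, h⟩)
      refine pick w₁ w₂ w₃ hw12 hw13 hw23 ?_ ?_ ?_
      · rintro ⟨-, hmul⟩
        have h2 := congrArg Prod.snd hmul
        simp only [Prod.snd_mul, Prod.snd_zero] at h2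
        rw [one_mul] at h2
        exact ht2 h2
      · rintro ⟨-, hmul⟩
        have h2 := congrArg Prod.snd hmul
        simp only [Prod.snd_mul, Prod.snd_zero] at h2
        rw [mul_comm] at h2
        exact ht2 (hrega _ h2)
      · rintro ⟨-, hmul⟩
        have h2 := congrArg Prod.snd hmul
        simp only [Prod.snd_mul, Prod.snd_zero] at h2
        rw [mul_comm] at h2
        exact ht2 (hregb _ h2)
    · -- t₁ ≠ 0 : use (1,0), (1,a), (1,b)
      refine pick ⟨((1 : R₁), (0 : R₂)), mem1 1 one_ne_zero⟩
        ⟨((1 : R₁), a), mem3 1 a ha⟩ ⟨((1 : R₁), b), mem3 1 b hb⟩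
        (subne _ _ (pairne2 _ _ _ _ (fun h => ha0 h.symm)))
        (subne _ _ (pairne2 _ _ _ _ (fun h => hb0 h.symm)))
        (subne _ _ (pairne2 _ _ _ _ hab)) ?_ ?_ ?_
      all_goals
        rintro ⟨-, hmul⟩
        have h1 := congrArg Prod.fst hmul
        simp only [Prod.fst_mul, Prod.fst_zero, one_mul] at h1
        exact ht1 h1
  -- lower bound
  have hlow : ∀ w ∈ {w | ∃ f : V → Fin 3, IsRomanDominating G f ∧
      {v | f v ≠ 0}.Finite ∧ w = ∑ᶠ v, (f v : ℕ)}, 4 ≤ w := by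
    rintro w ⟨f, hRD, hfin, rfl⟩
    have hval : ∀ v : V, (f v : ℕ) ≠ 0 ↔ f v ≠ 0 := by
      intro v
      constructor
      · intro h h'; exact h (by rw [h']; rfl)
      · intro h h'; exact h (Fin.ext h')
    have hsupfin : (Function.support fun v => ((f v : ℕ))).Finite := by
      refine Set.Finite.subset hfin ?_
      intro v hv
      exact (hval v).1 hv
    have hsum : ∀ s : Finset V, (∀ v ∈ s, f v ≠ 0) →
        ∑ v ∈ s, (f v : ℕ) ≤ ∑ᶠ v, (f v : ℕ) := by
      intro s hs
      rw [finsum_eq_sum _ hsupfin]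
      apply Finset.sum_le_sum_of_subset
      intro v hv
      rw [Set.Finite.mem_toFinset]
      exact (hval v).2 (hs v hv)
    have hone : ∀ v : V, f v ≠ 0 → 1 ≤ (f v : ℕ) :=
      fun v h => Nat.one_le_iff_ne_zero.2 ((hval v).2 h)
    by_cases hT : ∃ t, f t = 2
    · obtain ⟨t, ht⟩ := hT
      by_cases hT2 : ∃ t', t' ≠ t ∧ f t' = 2
      · obtain ⟨t', ht'ne, ht'⟩ := hT2
        calc (4 : ℕ) = ∑ v ∈ ({t', t} : Finset V), (f v : ℕ) := by
              rw [Finset.sum_pair ht'ne, ht, ht']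
              rfl
          _ ≤ _ := hsum _ (by
              intro v hv
              rcases Finset.mem_insert.1 hv with h | h
              · rw [h, ht']; decide
              · rw [Finset.mem_singleton.1 h, ht]; decide)
      · obtain ⟨u₁, u₂, h12, h1t, h2t, hn1, hn2⟩ := hnon t
        have hfu : ∀ u : V, u ≠ t → ¬ G.Adj u t → f u ≠ 0 := by
          intro u hut hnadj h0
          obtain ⟨v, hadj, hv2⟩ := hRD u h0
          have hvt : v = t := by
            by_contra hne
            exact hT2 ⟨v, hne, hv2⟩
          exact hnadj (hvt ▸ hadj)
        have hf1 := hfu u₁ h1t hn1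
        have hf2 := hfu u₂ h2t hn2
        have e1 : t ∉ ({u₁, u₂} : Finset V) := by
          simp only [Finset.mem_insert, Finset.mem_singleton]
          rintro (h | h)
          · exact h1t h.symm
          · exact h2t h.symm
        calc (4 : ℕ) = 2 + (1 + 1) := rfl
          _ ≤ (f t : ℕ) + ((f u₁ : ℕ) + (f u₂ : ℕ)) := by
              have hft : (f t : ℕ) = 2 := by rw [ht]; rfl
              rw [hft]
              exact Nat.add_le_add_left (Nat.add_le_add (hone _ hf1) (hone _ hf2)) 2
          _ = ∑ v ∈ ({t, u₁, u₂} : Finset V), (f v : ℕ) := by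
              rw [Finset.sum_insert e1, Finset.sum_pair h12]
          _ ≤ _ := hsum _ (by
              intro v hv
              simp only [Finset.mem_insert, Finset.mem_singleton] at hv
              rcases hv with h | h | h
              · rw [h, ht]; decide
              · exact h ▸ hf1
              · exact h ▸ hf2)
    · push_neg at hT
      have hall : ∀ v : V, f v ≠ 0 := by
        intro v h0
        obtain ⟨v', _, hv'⟩ := hRD v h0
        exact hT v' hv'
      have hcard : ({w₁, w₂, w₃, w₄} : Finset V).card = 4 := by
        rw [Finset.card_insert_of_notMem (by simp [hw12, hw13, hw14]),
          Finset.card_insert_of_notMem (by simp [hw23, hw24]),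
          Finset.card_insert_of_notMem (by simp [hw34]),
          Finset.card_singleton]
      calc (4 : ℕ) = ∑ _v ∈ ({w₁, w₂, w₃, w₄} : Finset V), 1 := by
            rw [Finset.sum_const, hcard, smul_eq_mul, mul_one]
        _ ≤ ∑ v ∈ ({w₁, w₂, w₃, w₄} : Finset V), (f v : ℕ) :=
            Finset.sum_le_sum (fun v _ => hone v (hall v))
        _ ≤ _ := hsum _ (fun v _ => hall v)
  -- conclusion
  have hrdn : romanDominationNumber G = sInf {w | ∃ f : V → Fin 3, IsRomanDominating G f ∧
      {v | f v ≠ 0}.Finite ∧ w = ∑ᶠ v, (f v : ℕ)} := rfl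
  rw [hrdn]
  exact le_antisymm (Nat.sInf_le h4mem) (le_csInf ⟨4, h4mem⟩ hlow)
end

section
/- Let R₁ and R₂ be commutative rings with identity, each having at least two nonzero zero-divisors and each satisfying xy = 0 for all zero-divisors x, y of Rᵢ (so each Γ(Rᵢ) is complete and has diameter 1). Then γ_R(Γ(R₁ × R₂)) = 4. -/
lemma zdv_pair {R₁ R₂ : Type*} [CommRing R₁] [CommRing R₂] (p q : R₁ × R₂)
    (hp : p ≠ 0) (hq : q ≠ 0) (h1 : p.1 * q.1 = 0) (h2 : p.2 * q.2 = 0) :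
    p ∈ zdvSet (R₁ × R₂) :=
  ⟨hp, q, hq, Prod.ext h1 h2⟩

lemma fin3_one_le {a : Fin 3} (h : a ≠ 0) : 1 ≤ (a : ℕ) :=
  Nat.one_le_iff_ne_zero.2 (fun hv => h (Fin.ext (by simpa using hv)))

/-- Sum over a finset is at most the finsum, for ℕ-valued functions with finite support. -/
lemma finset_sum_le_finsum_nat {V : Type*} (g : V → ℕ) (hfin : (Function.support g).Finite)
    (s : Finset V) : ∑ v ∈ s, g v ≤ ∑ᶠ v, g v := by
  classical
  rw [finsum_eq_sum g hfin]
  have h1 : ∑ v ∈ s, g v = ∑ v ∈ s ∩ hfin.toFinset, g v := by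
    refine (Finset.sum_subset Finset.inter_subset_left ?_).symm
    intro x hx hx'
    by_contra h0
    exact hx' (Finset.mem_inter.2 ⟨hx, hfin.mem_toFinset.2 h0⟩)
  rw [h1]
  exact Finset.sum_le_sum_of_subset Finset.inter_subset_right

theorem stmt_3 (R₁ R₂ : Type*) [CommRing R₁] [CommRing R₂]
    (h₁ : ∃ a b : R₁, a ≠ b ∧ a ∈ zdvSet R₁ ∧ b ∈ zdvSet R₁)
    (h₂ : ∃ a b : R₂, a ≠ b ∧ a ∈ zdvSet R₂ ∧ b ∈ zdvSet R₂)
    (hc₁ : ∀ x ∈ zdvSet R₁, ∀ y ∈ zdvSet R₁, x * y = 0)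
    (hc₂ : ∀ x ∈ zdvSet R₂, ∀ y ∈ zdvSet R₂, x * y = 0) :
    romanDominationNumber (zeroDivisorGraph (R₁ × R₂)) = 4 := by
  classical
  obtain ⟨a₁, b₁, hab₁, ha₁, hb₁⟩ := h₁
  obtain ⟨a₂, b₂, hab₂, ha₂, hb₂⟩ := h₂
  have ha₁0 : a₁ ≠ 0 := ha₁.1
  have hb₁0 : b₁ ≠ 0 := hb₁.1
  have ha₂0 : a₂ ≠ 0 := ha₂.1
  have hb₂0 : b₂ ≠ 0 := hb₂.1
  have : Nontrivial R₁ := nontrivial_of_ne a₁ 0 ha₁0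
  have : Nontrivial R₂ := nontrivial_of_ne a₂ 0 ha₂0
  have haa₁ : a₁ * a₁ = 0 := hc₁ a₁ ha₁ a₁ ha₁
  have hba₁ : b₁ * a₁ = 0 := hc₁ b₁ hb₁ a₁ ha₁
  have haa₂ : a₂ * a₂ = 0 := hc₂ a₂ ha₂ a₂ ha₂
  have hba₂ : b₂ * a₂ = 0 := hc₂ b₂ hb₂ a₂ ha₂
  set S := zdvSet (R₁ × R₂) with hSdef
  set G := zeroDivisorGraph (R₁ × R₂) with hGdef
  -- basic vertices
  have mOA : ((0 : R₁), a₂) ∈ S := zdv_pair _ (a₁, (0:R₂))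
    (by simp [Prod.ext_iff, ha₂0]) (by simp [Prod.ext_iff, ha₁0]) (by simp) (by simp)
  have mAO : (a₁, (0 : R₂)) ∈ S := zdv_pair _ ((0:R₁), a₂)
    (by simp [Prod.ext_iff, ha₁0]) (by simp [Prod.ext_iff, ha₂0]) (by simp) (by simp)
  have mBO : (b₁, (0 : R₂)) ∈ S := zdv_pair _ ((0:R₁), a₂)
    (by simp [Prod.ext_iff, hb₁0]) (by simp [Prod.ext_iff, ha₂0]) (by simp) (by simp)
  have mOB : ((0 : R₁), b₂) ∈ S := zdv_pair _ (a₁, (0:R₂))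
    (by simp [Prod.ext_iff, hb₂0]) (by simp [Prod.ext_iff, ha₁0]) (by simp) (by simp)
  have mone0 : ((1 : R₁), (0 : R₂)) ∈ S := zdv_pair _ ((0:R₁), a₂)
    (by simp [Prod.ext_iff]) (by simp [Prod.ext_iff, ha₂0]) (by simp) (by simp)
  have moneA : ((1 : R₁), a₂) ∈ S := zdv_pair _ ((0:R₁), a₂)
    (by simp [Prod.ext_iff]) (by simp [Prod.ext_iff, ha₂0]) (by simp) (by simpa using haa₂)
  have moneB : ((1 : R₁), b₂) ∈ S := zdv_pair _ ((0:R₁), a₂)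
    (by simp [Prod.ext_iff]) (by simp [Prod.ext_iff, ha₂0]) (by simp) (by simpa using hba₂)
  have m0one : ((0 : R₁), (1 : R₂)) ∈ S := zdv_pair _ (a₁, (0:R₂))
    (by simp [Prod.ext_iff]) (by simp [Prod.ext_iff, ha₁0]) (by simp) (by simp)
  have mAone : (a₁, (1 : R₂)) ∈ S := zdv_pair _ (a₁, (0:R₂))
    (by simp [Prod.ext_iff]) (by simp [Prod.ext_iff, ha₁0]) (by simpa using haa₁) (by simp)
  have mBone : (b₁, (1 : R₂)) ∈ S := zdv_pair _ (a₁, (0:R₂))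
    (by simp [Prod.ext_iff]) (by simp [Prod.ext_iff, ha₁0]) (by simpa using hba₁) (by simp)
  -- named vertices
  let vAO : S := ⟨(a₁, 0), mAO⟩
  let vBO : S := ⟨(b₁, 0), mBO⟩
  let vOA : S := ⟨(0, a₂), mOA⟩
  let vOB : S := ⟨(0, b₂), mOB⟩
  have dAOBO : vAO ≠ vBO := by simp [vAO, vBO, Subtype.ext_iff, Prod.ext_iff, hab₁]
  have dAOOA : vAO ≠ vOA := by simp [vAO, vOA, Subtype.ext_iff, Prod.ext_iff, ha₁0]
  have dAOOB : vAO ≠ vOB := by simp [vAO, vOB, Subtype.ext_iff, Prod.ext_iff, ha₁0]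
  have dBOOA : vBO ≠ vOA := by simp [vBO, vOA, Subtype.ext_iff, Prod.ext_iff, hb₁0]
  have dBOOB : vBO ≠ vOB := by simp [vBO, vOB, Subtype.ext_iff, Prod.ext_iff, hb₁0]
  have dOAOB : vOA ≠ vOB := by simp [vOA, vOB, Subtype.ext_iff, Prod.ext_iff, hab₂]
  -- every vertex has two distinct non-neighbours, both different from it
  have key : ∀ v : S, ∃ p q : S, p ≠ q ∧ p ≠ v ∧ q ≠ v ∧ ¬ G.Adj v p ∧ ¬ G.Adj v q := by
    intro v
    have hv0 : (v : R₁ × R₂) ≠ 0 := v.2.1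
    have hxy : (v : R₁ × R₂).1 ≠ 0 ∨ (v : R₁ × R₂).2 ≠ 0 := by
      by_contra h
      push_neg at h
      exact hv0 (Prod.ext h.1 h.2)
    rcases hxy with hx | hy
    · -- use (1,0), (1,a₂), (1,b₂)
      let u₁ : S := ⟨(1, 0), mone0⟩
      let u₂ : S := ⟨(1, a₂), moneA⟩
      let u₃ : S := ⟨(1, b₂), moneB⟩
      have hnadj : ∀ (z : R₂) (m : ((1:R₁), z) ∈ S), ¬ G.Adj v ⟨(1, z), m⟩ := by
        rintro z m ⟨-, hmul⟩
        have h1 : (v : R₁ × R₂).1 * 1 = 0 := congrArg Prod.fst hmul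
        rw [mul_one] at h1
        exact hx h1
      have d12 : u₁ ≠ u₂ := by
        simp [u₁, u₂, Subtype.ext_iff, Prod.ext_iff]; exact fun h => ha₂0 h.symm
      have d13 : u₁ ≠ u₃ := by
        simp [u₁, u₃, Subtype.ext_iff, Prod.ext_iff]; exact fun h => hb₂0 h.symm
      have d23 : u₂ ≠ u₃ := by
        simp [u₂, u₃, Subtype.ext_iff, Prod.ext_iff, hab₂]
      by_cases h1 : v = u₁
      · exact ⟨u₂, u₃, d23, by rw [h1]; exact d12.symm, by rw [h1]; exact d13.symm,
          hnadj _ _, hnadj _ _⟩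
      · by_cases h2 : v = u₂
        · exact ⟨u₁, u₃, d13, by rw [h2]; exact d12, by rw [h2]; exact d23.symm,
            hnadj _ _, hnadj _ _⟩
        · exact ⟨u₁, u₂, d12, fun h => h1 h.symm, fun h => h2 h.symm, hnadj _ _, hnadj _ _⟩
    · -- use (0,1), (a₁,1), (b₁,1)
      let u₁ : S := ⟨(0, 1), m0one⟩
      let u₂ : S := ⟨(a₁, 1), mAone⟩
      let u₃ : S := ⟨(b₁, 1), mBone⟩
      have hnadj : ∀ (z : R₁) (m : (z, (1:R₂)) ∈ S), ¬ G.Adj v ⟨(z, 1), m⟩ := by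
        rintro z m ⟨-, hmul⟩
        have h1 : (v : R₁ × R₂).2 * 1 = 0 := congrArg Prod.snd hmul
        rw [mul_one] at h1
        exact hy h1
      have d12 : u₁ ≠ u₂ := by
        simp [u₁, u₂, Subtype.ext_iff, Prod.ext_iff]; exact fun h => ha₁0 h.symm
      have d13 : u₁ ≠ u₃ := by
        simp [u₁, u₃, Subtype.ext_iff, Prod.ext_iff]; exact fun h => hb₁0 h.symm
      have d23 : u₂ ≠ u₃ := by
        simp [u₂, u₃, Subtype.ext_iff, Prod.ext_iff, hab₁]
      by_cases h1 : v = u₁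
      · exact ⟨u₂, u₃, d23, by rw [h1]; exact d12.symm, by rw [h1]; exact d13.symm,
          hnadj _ _, hnadj _ _⟩
      · by_cases h2 : v = u₂
        · exact ⟨u₁, u₃, d13, by rw [h2]; exact d12, by rw [h2]; exact d23.symm,
            hnadj _ _, hnadj _ _⟩
        · exact ⟨u₁, u₂, d12, fun h => h1 h.symm, fun h => h2 h.symm, hnadj _ _, hnadj _ _⟩
  -- the set of weights
  set T : Set ℕ := {w | ∃ f : S → Fin 3, IsRomanDominating G f ∧
    {v | f v ≠ 0}.Finite ∧ w = ∑ᶠ v, (f v : ℕ)} with hTdef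
  -- 4 is a weight
  have h4mem : 4 ∈ T := by
    refine ⟨fun v => if v = vAO ∨ v = vOA then 2 else 0, ?_, ?_, ?_⟩
    · intro u hu
      have hne : ¬ (u = vAO ∨ u = vOA) := by
        intro h
        simp only [if_pos h] at hu
        exact absurd hu (by decide)
      push_neg at hne
      obtain ⟨huz, ⟨q1, q2⟩, hqne, hq⟩ := u.2
      have hq1 : (u : R₁ × R₂).1 * q1 = 0 := congrArg Prod.fst hq
      have hq2 : (u : R₁ × R₂).2 * q2 = 0 := congrArg Prod.snd hq
      by_cases hq10 : q1 = 0
      · -- q2 ≠ 0, so u.2 is a zero-divisor; u adjacent to vOA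
        have hq20 : q2 ≠ 0 := fun h => hqne (Prod.ext hq10 h)
        have h2a : (u : R₁ × R₂).2 * a₂ = 0 := by
          by_cases h0 : (u : R₁ × R₂).2 = 0
          · rw [h0, zero_mul]
          · exact hc₂ _ ⟨h0, q2, hq20, hq2⟩ a₂ ha₂
        refine ⟨vOA, ⟨hne.2, ?_⟩, if_pos (Or.inr rfl)⟩
        exact Prod.ext (by simp [vOA]) (by simpa using h2a)
      · -- u.1 is a zero-divisor; u adjacent to vAO
        have h1a : (u : R₁ × R₂).1 * a₁ = 0 := by
          by_cases h0 : (u : R₁ × R₂).1 = 0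
          · rw [h0, zero_mul]
          · exact hc₁ _ ⟨h0, q1, hq10, hq1⟩ a₁ ha₁
        refine ⟨vAO, ⟨hne.1, ?_⟩, if_pos (Or.inl rfl)⟩
        exact Prod.ext (by simpa using h1a) (by simp [vAO])
    · refine Set.Finite.subset ((Set.finite_singleton vOA).insert vAO) ?_
      intro v hv
      by_contra h
      simp only [Set.mem_insert_iff, Set.mem_singleton_iff] at h
      push_neg at h
      exact hv (by simp only [Set.mem_setOf_eq, if_neg (not_or.2 h), ne_eq, not_true_eq_false,
        not_not])
    · have hsupp : (Function.support fun v => (((if v = vAO ∨ v = vOA then 2 else 0 : Fin 3)) : ℕ))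
          ⊆ (({vAO, vOA} : Finset S) : Set S) := by
        intro v hv
        simp only [Function.support, Set.mem_setOf_eq] at hv
        by_contra h
        simp only [Finset.coe_insert, Finset.coe_singleton, Set.mem_insert_iff,
          Set.mem_singleton_iff] at h
        push_neg at h
        exact hv (by simp [if_neg (not_or.2 h)])
      rw [finsum_eq_finset_sum_of_support_subset _ hsupp, Finset.sum_pair dAOOA]
      simp
  -- every weight is at least 4
  have hlb : ∀ w ∈ T, 4 ≤ w := by
    rintro w ⟨f, hrdf, hfin, rfl⟩
    set g : S → ℕ := fun v => (f v : ℕ) with hgdef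
    have hgfin : (Function.support g).Finite := by
      refine hfin.subset ?_
      intro v hv
      simp only [Function.support, Set.mem_setOf_eq] at hv
      intro h0
      exact hv (by simp [g, h0])
    have hbound : ∀ s : Finset S, ∑ v ∈ s, g v ≤ ∑ᶠ v, g v :=
      finset_sum_le_finsum_nat g hgfin
    by_cases h2 : ∃ v₀, f v₀ = 2
    · obtain ⟨v₀, hv₀⟩ := h2
      have hgv₀ : g v₀ = 2 := by simp [g, hv₀]
      obtain ⟨p, q, hpq, hpv, hqv, hnp, hnq⟩ := key v₀
      by_cases hfp : f p = 0
      · obtain ⟨v, hadj, hv2⟩ := hrdf p hfp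
        have hvv₀ : v ≠ v₀ := by
          rintro rfl
          exact hnp hadj.symm
        calc (4 : ℕ) = g v₀ + g v := by simp [g, hv₀, hv2]
          _ = ∑ x ∈ ({v₀, v} : Finset S), g x := (Finset.sum_pair (Ne.symm hvv₀)).symm
          _ ≤ _ := hbound _
      · by_cases hfq : f q = 0
        · obtain ⟨v, hadj, hv2⟩ := hrdf q hfq
          have hvv₀ : v ≠ v₀ := by
            rintro rfl
            exact hnq hadj.symm
          calc (4 : ℕ) = g v₀ + g v := by simp [g, hv₀, hv2]
            _ = ∑ x ∈ ({v₀, v} : Finset S), g x := (Finset.sum_pair (Ne.symm hvv₀)).symm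
            _ ≤ _ := hbound _
        · have hp1 : 1 ≤ g p := fin3_one_le hfp
          have hq1 : 1 ≤ g q := fin3_one_le hfq
          have hsum : ∑ x ∈ ({v₀, p, q} : Finset S), g x = g v₀ + (g p + g q) := by
            rw [Finset.sum_insert (by simp [Ne.symm hpv, Ne.symm hqv]),
              Finset.sum_pair hpq]
          have : 4 ≤ ∑ x ∈ ({v₀, p, q} : Finset S), g x := by
            rw [hsum, hgv₀]; omega
          exact this.trans (hbound _)
    · push_neg at h2
      have hall : ∀ u : S, f u ≠ 0 := by
        intro u hu
        obtain ⟨v, -, hv2⟩ := hrdf u hu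
        exact h2 v hv2
      have hsum : 4 ≤ ∑ x ∈ ({vAO, vBO, vOA, vOB} : Finset S), g x := by
        rw [Finset.sum_insert (by simp [dAOBO, dAOOA, dAOOB]),
          Finset.sum_insert (by simp [dBOOA, dBOOB]), Finset.sum_pair dOAOB]
        have h1 := fin3_one_le (hall vAO)
        have h2 := fin3_one_le (hall vBO)
        have h3 := fin3_one_le (hall vOA)
        have h4 := fin3_one_le (hall vOB)
        simp only [g] at *
        omega
      exact hsum.trans (hbound _)
  -- conclude
  have : romanDominationNumber G = sInf T := rfl
  rw [this]
  exact le_antisymm (Nat.sInf_le h4mem) (le_csInf ⟨4, h4mem⟩ hlb)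
end

section
/- Let R₁ be a nontrivial commutative ring with identity having at most one nonzero zero-divisor (so Γ(R₁) has diameter 0), and let R₂ be a finite commutative local ring with identity whose maximal ideal is principal, generated by an element x with x² ≠ 0 (so Γ(R₂) has diameter 2). Then γ_R(Γ(R₁ × R₂)) = 4. -/
theorem stmt_4 (R₁ R₂ : Type*) [CommRing R₁] [CommRing R₂]
    [Nontrivial R₁] [Finite R₂] [IsLocalRing R₂]
    (h₁ : (zdvSet R₁).Subsingleton)
    (h₂ : ∃ x : R₂, IsLocalRing.maximalIdeal R₂ = Ideal.span {x} ∧ x ^ 2 ≠ 0) :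
    romanDominationNumber (zeroDivisorGraph (R₁ × R₂)) = 4 := by
  classical
  obtain ⟨x, hmx, hx2⟩ := h₂
  have hx0 : x ≠ 0 := fun h => hx2 (by rw [h]; ring)
  -- x is nilpotent
  have hnilp : IsNilpotent x := by
    obtain ⟨i, j, hne, hij⟩ := Finite.exists_ne_map_eq_of_infinite (fun n : ℕ => x ^ n)
    have key : ∀ i j : ℕ, i < j → x ^ i = x ^ j → IsNilpotent x := by
      intro i j hlt hij
      have hxm : x ∈ IsLocalRing.maximalIdeal R₂ := hmx ▸ Ideal.mem_span_singleton_self x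
      have h1 : IsUnit (1 - x ^ (j - i)) := by
        apply IsLocalRing.isUnit_one_sub_self_of_mem_nonunits
        exact (IsLocalRing.mem_maximalIdeal _).mp (Ideal.pow_mem_of_mem _ hxm _ (by omega))
      have hz : x ^ i * (1 - x ^ (j - i)) = 0 := by
        rw [mul_sub, mul_one, ← pow_add, show i + (j - i) = j by omega, hij, sub_self]
      exact ⟨i, (IsUnit.mul_left_eq_zero h1).mp hz⟩
    rcases lt_or_gt_of_ne hne with h | h
    · exact key i j h hij
    · exact key j i h hij.symm
  have hex : ∃ n, x ^ n = 0 := hnilp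
  set n := Nat.find hex with hn
  have hxn : x ^ n = 0 := Nat.find_spec hex
  have hn1 : 1 ≤ n := by
    rcases Nat.eq_zero_or_pos n with h | h
    · exfalso; rw [h, pow_zero] at hxn; exact one_ne_zero hxn
    · exact h
  set t := x ^ (n - 1) with htdef
  have ht0 : t ≠ 0 := Nat.find_min hex (by omega)
  have htx : x * t = 0 := by
    rw [htdef, ← pow_succ', show n - 1 + 1 = n by omega]; exact hxn
  have htx' : t * x = 0 := by rwa [mul_comm]
  have hxnu : ¬ IsUnit x := fun h => ht0 ((IsUnit.mul_right_eq_zero h).mp htx)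
  have htnu : ¬ IsUnit t := fun h => hx0 ((IsUnit.mul_right_eq_zero h).mp (by rwa [mul_comm]))
  have hxt : x ≠ t := by
    intro h
    apply hx2
    rw [pow_two]; nth_rewrite 2 [h]; exact htx
  have hbt : ∀ b : R₂, ¬ IsUnit b → b * t = 0 := by
    intro b hb
    have hbm : b ∈ Ideal.span ({x} : Set R₂) := hmx ▸ (IsLocalRing.mem_maximalIdeal _).mpr hb
    obtain ⟨r, hr⟩ := Ideal.mem_span_singleton'.mp hbm
    rw [← hr, mul_assoc, htx, mul_zero]
  have h1x : IsUnit (1 + x) := hnilp.isUnit_one_add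
  have h1xne : (1 : R₂) ≠ 1 + x := fun h => hx0 (by have := h.symm; rwa [add_eq_left] at this)
  -- z : the "annihilator" element in R₁
  have hzex : ∃ z : R₁, z ≠ 0 ∧ ∀ a c : R₁, c ≠ 0 → a * c = 0 → a * z = 0 := by
    by_cases h : ∃ z, z ∈ zdvSet R₁
    · obtain ⟨z, hz0, y, hy0, hzy⟩ := h
      have hyz : y = z := h₁ ⟨hy0, z, hz0, by rwa [mul_comm]⟩ ⟨hz0, y, hy0, hzy⟩
      have hzz : z * z = 0 := by rw [← hyz] at hzy ⊢; exact hzy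
      refine ⟨z, hz0, fun a c hc hac => ?_⟩
      rcases eq_or_ne a 0 with h0 | h0
      · rw [h0, zero_mul]
      · have : a = z := h₁ ⟨h0, c, hc, hac⟩ ⟨hz0, y, hy0, hzy⟩
        rw [this]; exact hzz
    · refine ⟨1, one_ne_zero, fun a c hc hac => ?_⟩
      rcases eq_or_ne a 0 with h0 | h0
      · rw [h0, zero_mul]
      · exact absurd ⟨a, h0, c, hc, hac⟩ h
  obtain ⟨z, hz0, hzmul⟩ := hzex
  -- vertex constructor
  have mk : ∀ (a : R₁) (b : R₂), ¬(a = 0 ∧ b = 0) → ∀ (c : R₁) (d : R₂), ¬(c = 0 ∧ d = 0) →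
      a * c = 0 → b * d = 0 → ((a, b) : R₁ × R₂) ∈ zdvSet (R₁ × R₂) := by
    intro a b hab c d hcd h1 h2
    refine ⟨by simpa [Prod.ext_iff] using hab, (c, d), by simpa [Prod.ext_iff] using hcd, ?_⟩
    simp [Prod.ext_iff, h1, h2]
  set V := zdvSet (R₁ × R₂)
  set G := zeroDivisorGraph (R₁ × R₂) with hG
  have hadj : ∀ u v : V, G.Adj u v ↔ u ≠ v ∧ (u : R₁ × R₂) * (v : R₁ × R₂) = 0 := by
    intro u v; rfl
  -- the standard vertices
  have mV10 : ((1, 0) : R₁ × R₂) ∈ V := mk 1 0 (by simp) 0 1 (by simp) (by ring) (by ring)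
  have mV01 : ((0, 1) : R₁ × R₂) ∈ V := mk 0 1 (by simp) 1 0 (by simp) (by ring) (by ring)
  have mV0x : ((0, x) : R₁ × R₂) ∈ V := mk 0 x (by simp [hx0]) 0 t (by simp [ht0]) (by ring) htx
  have mV0t : ((0, t) : R₁ × R₂) ∈ V := mk 0 t (by simp [ht0]) 1 0 (by simp) (by ring) (by ring)
  have mV1x : ((1, x) : R₁ × R₂) ∈ V := mk 1 x (by simp) 0 t (by simp [ht0]) (by ring) htx
  have mV1t : ((1, t) : R₁ × R₂) ∈ V := mk 1 t (by simp) 0 x (by simp [hx0]) (by ring) htx'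
  have mVz0 : ((z, 0) : R₁ × R₂) ∈ V := mk z 0 (by simp [hz0]) 0 1 (by simp) (by ring) (by ring)
  have mV01x : ((0, 1 + x) : R₁ × R₂) ∈ V := by
    refine mk 0 (1 + x) (fun h => hxnu ?_) 1 0 (by simp) (by ring) (by ring)
    rw [← neg_eq_of_add_eq_zero_right h.2]
    exact isUnit_one.neg
  set V10 : V := ⟨(1, 0), mV10⟩
  set V01 : V := ⟨(0, 1), mV01⟩
  set V0x : V := ⟨(0, x), mV0x⟩
  set V0t : V := ⟨(0, t), mV0t⟩
  set V1x : V := ⟨(1, x), mV1x⟩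
  set V1t : V := ⟨(1, t), mV1t⟩
  set Vz0 : V := ⟨(z, 0), mVz0⟩
  set V01x : V := ⟨(0, 1 + x), mV01x⟩
  have hVz0V0t : Vz0 ≠ V0t := by
    intro h
    exact hz0 (congrArg (fun v : V => (v : R₁ × R₂).1) h)
  -- structure of vertices: every vertex (a,b) has second coordinate a nonunit, or
  -- b is a unit and a * z = 0.
  have hstruct : ∀ (a : R₁) (b : R₂), ((a, b) : R₁ × R₂) ∈ V → IsUnit b → a * z = 0 := by
    rintro a b ⟨hne, ⟨c, d⟩, hcd, hmul⟩ hb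
    have h1 : a * c = 0 := congrArg Prod.fst hmul
    have h2 : b * d = 0 := congrArg Prod.snd hmul
    have hd : d = 0 := (IsUnit.mul_right_eq_zero hb).mp h2
    have hc : c ≠ 0 := by
      intro h
      exact hcd (by rw [h, hd]; rfl)
    exact hzmul a c hc h1
  ------------------------------------------------------------------
  -- Upper bound: a Roman dominating function of weight 4
  ------------------------------------------------------------------
  have hmem4 : (4 : ℕ) ∈ {w | ∃ f : V → Fin 3, IsRomanDominating G f ∧
      {v | f v ≠ 0}.Finite ∧ w = ∑ᶠ v, (f v : ℕ)} := by
    refine ⟨fun v => if v = Vz0 ∨ v = V0t then 2 else 0, ?_, ?_, ?_⟩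
    · intro u hu
      have hu' : (if u = Vz0 ∨ u = V0t then (2 : Fin 3) else 0) = 0 := hu
      have hunot : ¬(u = Vz0 ∨ u = V0t) := by
        intro h; rw [if_pos h] at hu'; exact absurd hu' (by decide)
      obtain ⟨⟨a, b⟩, hab⟩ := u
      by_cases hb : IsUnit b
      · refine ⟨Vz0, ?_, if_pos (Or.inl rfl)⟩
        rw [hadj]
        constructor
        · intro h; exact hunot (Or.inl h)
        · show ((a, b) : R₁ × R₂) * (z, 0) = 0
          have : a * z = 0 := hstruct a b hab hb
          simp [Prod.ext_iff, this]
      · refine ⟨V0t, ?_, if_pos (Or.inr rfl)⟩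
        rw [hadj]
        constructor
        · intro h; exact hunot (Or.inr h)
        · show ((a, b) : R₁ × R₂) * (0, t) = 0
          simp [Prod.ext_iff, hbt b hb]
    · apply Set.Finite.subset ((Set.finite_singleton V0t).insert Vz0)
      intro v hv
      by_contra hc
      simp only [Set.mem_insert_iff, Set.mem_singleton_iff] at hc
      push_neg at hc
      have : (if v = Vz0 ∨ v = V0t then (2 : Fin 3) else 0) = 0 := if_neg (by tauto)
      exact hv this
    · have hsupp : (Function.support fun v : V => (((if v = Vz0 ∨ v = V0t then (2 : Fin 3) else 0) : Fin 3) : ℕ))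
          ⊆ (({Vz0, V0t} : Finset V) : Set V) := by
        intro v hv
        simp only [Function.mem_support] at hv
        by_contra hc
        simp only [Finset.coe_insert, Finset.coe_singleton, Set.mem_insert_iff,
          Set.mem_singleton_iff] at hc
        push_neg at hc
        rw [if_neg (by tauto)] at hv
        exact hv rfl
      show (4 : ℕ) = ∑ᶠ v : V, (((if v = Vz0 ∨ v = V0t then (2 : Fin 3) else 0) : Fin 3) : ℕ)
      rw [finsum_eq_sum_of_support_subset _ hsupp, Finset.sum_pair hVz0V0t,
        if_pos (Or.inl rfl), if_pos (Or.inr rfl)]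
      rfl
  ------------------------------------------------------------------
  -- Non-adjacency: every vertex has two distinct non-neighbours
  ------------------------------------------------------------------
  have nonadj : ∀ v₀ : V, ∃ u₁ u₂ : V, u₁ ≠ u₂ ∧ u₁ ≠ v₀ ∧ u₂ ≠ v₀ ∧
      ¬ G.Adj u₁ v₀ ∧ ¬ G.Adj u₂ v₀ := by
    rintro ⟨⟨a, b⟩, hab⟩
    have hne0 : ¬(a = 0 ∧ b = 0) := by
      intro h
      exact hab.1 (by rw [h.1, h.2]; rfl)
    by_cases hb0 : b = 0
    · -- use (1,x) and (1,t)
      have ha0 : a ≠ 0 := fun h => hne0 ⟨h, hb0⟩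
      refine ⟨V1x, V1t, ?_, ?_, ?_, ?_, ?_⟩
      · intro h
        exact hxt (congrArg (fun v : V => (v : R₁ × R₂).2) h)
      · intro h
        exact hx0 (hb0 ▸ (congrArg (fun v : V => (v : R₁ × R₂).2) h))
      · intro h
        exact ht0 (hb0 ▸ (congrArg (fun v : V => (v : R₁ × R₂).2) h))
      · rw [hadj]
        rintro ⟨-, h⟩
        have : (1 : R₁) * a = 0 := congrArg Prod.fst h
        rw [one_mul] at this
        exact ha0 this
      · rw [hadj]
        rintro ⟨-, h⟩
        have : (1 : R₁) * a = 0 := congrArg Prod.fst h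
        rw [one_mul] at this
        exact ha0 this
    · by_cases hbu : IsUnit b
      · -- use (0,x) and (0,t)
        refine ⟨V0x, V0t, ?_, ?_, ?_, ?_, ?_⟩
        · intro h
          exact hxt (congrArg (fun v : V => (v : R₁ × R₂).2) h)
        · intro h
          have h2 : x = b := congrArg (fun v : V => (v : R₁ × R₂).2) h
          exact hxnu (by rw [h2]; exact hbu)
        · intro h
          have h2 : t = b := congrArg (fun v : V => (v : R₁ × R₂).2) h
          exact htnu (by rw [h2]; exact hbu)
        · rw [hadj]
          rintro ⟨-, h⟩
          have : x * b = 0 := congrArg Prod.snd h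
          exact hx0 ((IsUnit.mul_left_eq_zero hbu).mp this)
        · rw [hadj]
          rintro ⟨-, h⟩
          have : t * b = 0 := congrArg Prod.snd h
          exact ht0 ((IsUnit.mul_left_eq_zero hbu).mp this)
      · -- use (0,1) and (0,1+x)
        refine ⟨V01, V01x, ?_, ?_, ?_, ?_, ?_⟩
        · intro h
          exact h1xne (congrArg (fun v : V => (v : R₁ × R₂).2) h)
        · intro h
          have h2 : (1 : R₂) = b := congrArg (fun v : V => (v : R₁ × R₂).2) h
          exact hbu (by rw [← h2]; exact isUnit_one)
        · intro h
          have h2 : (1 + x : R₂) = b := congrArg (fun v : V => (v : R₁ × R₂).2) h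
          exact hbu (by rw [← h2]; exact h1x)
        · rw [hadj]
          rintro ⟨-, h⟩
          have : (1 : R₂) * b = 0 := congrArg Prod.snd h
          rw [one_mul] at this
          exact hb0 this
        · rw [hadj]
          rintro ⟨-, h⟩
          have : (1 + x) * b = 0 := congrArg Prod.snd h
          exact hb0 ((IsUnit.mul_right_eq_zero h1x).mp this)
  ------------------------------------------------------------------
  -- Lower bound
  ------------------------------------------------------------------
  have hlb : ∀ w ∈ {w | ∃ f : V → Fin 3, IsRomanDominating G f ∧
      {v | f v ≠ 0}.Finite ∧ w = ∑ᶠ v, (f v : ℕ)}, 4 ≤ w := by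
    rintro w ⟨f, hRD, hfin, rfl⟩
    have hfin' : (Function.support fun v : V => ((f v : ℕ))).Finite := by
      apply hfin.subset
      intro v hv
      simp only [Function.mem_support] at hv
      intro h
      exact hv (by rw [h]; rfl)
    set F := hfin'.toFinset with hF
    have hsum : ∑ᶠ v, ((f v : ℕ)) = ∑ v ∈ F, ((f v : ℕ)) :=
      finsum_eq_sum_of_support_toFinset_subset _ hfin' (le_refl _)
    rw [hsum]
    have hmemF : ∀ v : V, f v ≠ 0 → v ∈ F := by
      intro v hv
      rw [hF, Set.Finite.mem_toFinset, Function.mem_support]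
      intro h
      exact hv (Fin.ext (by simpa using h))
    have hval1 : ∀ v : V, f v ≠ 0 → 1 ≤ (f v : ℕ) := by
      intro v hv
      rcases Nat.eq_zero_or_pos (f v : ℕ) with h | h
      · exact absurd (Fin.ext (by simpa using h)) hv
      · exact h
    have hsub_le : ∀ T : Finset V, T ⊆ F → ∑ v ∈ T, ((f v : ℕ)) ≤ ∑ v ∈ F, ((f v : ℕ)) :=
      fun T hT => Finset.sum_le_sum_of_subset hT
    by_cases hA : ∃ v₀, f v₀ = 2
    · obtain ⟨v₀, hv₀⟩ := hA
      by_cases hA2 : ∃ v₁, v₁ ≠ v₀ ∧ f v₁ = 2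
      · obtain ⟨v₁, hne, hv₁⟩ := hA2
        have h4 : (4 : ℕ) ≤ ∑ v ∈ ({v₁, v₀} : Finset V), ((f v : ℕ)) := by
          rw [Finset.sum_pair hne, hv₀, hv₁]
          decide
        refine le_trans h4 (hsub_le _ ?_)
        intro v hv
        simp only [Finset.mem_insert, Finset.mem_singleton] at hv
        rcases hv with h | h
        · exact hmemF v (by rw [h, hv₁]; decide)
        · exact hmemF v (by rw [h, hv₀]; decide)
      · obtain ⟨u₁, u₂, h12, h1v, h2v, hna1, hna2⟩ := nonadj v₀
        have honly : ∀ u : V, ¬ G.Adj u v₀ → u ≠ v₀ → f u ≠ 0 := by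
          intro u hna hne h0
          obtain ⟨v, hadj', hv2⟩ := hRD u h0
          have : v = v₀ := by
            by_contra h
            exact hA2 ⟨v, h, hv2⟩
          rw [this] at hadj'
          exact hna hadj'
        have hf1 : f u₁ ≠ 0 := honly u₁ hna1 h1v
        have hf2 : f u₂ ≠ 0 := honly u₂ hna2 h2v
        have hv0ne : f v₀ ≠ 0 := by rw [hv₀]; decide
        have h4 : (4 : ℕ) ≤ ∑ v ∈ ({v₀, u₁, u₂} : Finset V), ((f v : ℕ)) := by
          rw [Finset.sum_insert (by simp [h1v.symm, h2v.symm]),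
            Finset.sum_pair h12, hv₀]
          have := hval1 u₁ hf1
          have := hval1 u₂ hf2
          omega
        refine le_trans h4 (hsub_le _ ?_)
        intro v hv
        simp only [Finset.mem_insert, Finset.mem_singleton] at hv
        rcases hv with h | h | h
        · exact hmemF v (h ▸ hv0ne)
        · exact hmemF v (h ▸ hf1)
        · exact hmemF v (h ▸ hf2)
    · -- no vertex has value 2 : every vertex has value ≥ 1
      have hall : ∀ v : V, f v ≠ 0 := by
        intro v h0
        obtain ⟨v', _, hv2⟩ := hRD v h0
        exact hA ⟨v', hv2⟩
      have hd1 : V10 ≠ V0x := by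
        intro h; exact one_ne_zero (congrArg (fun v : V => (v : R₁ × R₂).1) h)
      have hd2 : V10 ≠ V0t := by
        intro h; exact one_ne_zero (congrArg (fun v : V => (v : R₁ × R₂).1) h)
      have hd3 : V10 ≠ V1x := by
        intro h; exact hx0 ((congrArg (fun v : V => (v : R₁ × R₂).2) h).symm)
      have hd4 : V0x ≠ V0t := by
        intro h; exact hxt (congrArg (fun v : V => (v : R₁ × R₂).2) h)
      have hd5 : V0x ≠ V1x := by
        intro h; exact one_ne_zero ((congrArg (fun v : V => (v : R₁ × R₂).1) h).symm)
      have hd6 : V0t ≠ V1x := by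
        intro h; exact one_ne_zero ((congrArg (fun v : V => (v : R₁ × R₂).1) h).symm)
      have h4 : (4 : ℕ) ≤ ∑ v ∈ ({V10, V0x, V0t, V1x} : Finset V), ((f v : ℕ)) := by
        rw [Finset.sum_insert (by simp [hd1, hd2, hd3]),
          Finset.sum_insert (by simp [hd4, hd5]),
          Finset.sum_pair hd6]
        have := hval1 V10 (hall V10)
        have := hval1 V0x (hall V0x)
        have := hval1 V0t (hall V0t)
        have := hval1 V1x (hall V1x)
        omega
      refine le_trans h4 (hsub_le _ ?_)
      intro v hv
      simp only [Finset.mem_insert, Finset.mem_singleton] at hv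
      rcases hv with h | h | h | h <;> exact hmemF v (h ▸ hall _)
  ------------------------------------------------------------------
  rw [romanDominationNumber]
  exact le_antisymm (Nat.sInf_le hmem4) (le_csInf ⟨4, hmem4⟩ hlb)
end

section
/- Let R₁ and R₂ be finite commutative local rings with identity whose maximal ideals are principal, generated respectively by x₁ and x₂. Suppose R₁ has at least two nonzero zero-divisors (so Γ(R₁) has diameter 1 or 2) and x₂² ≠ 0 (so Γ(R₂) has diameter 2). Then γ_R(Γ(R₁ × R₂)) = 4. -/
lemma aux_nilpotent {R : Type*} [CommRing R] [Finite R] [IsLocalRing R] {x : R}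
    (hx : ¬IsUnit x) : IsNilpotent x := by
  have key : ∀ i j : ℕ, i < j → x ^ (i + 1) = x ^ (j + 1) → IsNilpotent x := by
    intro i j hij hpow
    have hnu : ¬IsUnit (x ^ (j - i)) := by
      rw [isUnit_pow_iff (by omega : j - i ≠ 0)]; exact hx
    have hu : IsUnit (1 - x ^ (j - i)) :=
      IsLocalRing.isUnit_one_sub_self_of_mem_nonunits _ hnu
    have h0 : x ^ (i + 1) * (1 - x ^ (j - i)) = 0 := by
      have h : (i + 1) + (j - i) = j + 1 := by omega
      rw [mul_sub, mul_one, ← pow_add, h, hpow, sub_self]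
    exact ⟨i + 1, (hu.mul_left_eq_zero).mp h0⟩
  obtain ⟨i, j, hne, h⟩ := Finite.exists_ne_map_eq_of_infinite (fun n : ℕ => x ^ (n + 1))
  rcases hne.lt_or_gt with h' | h'
  · exact key i j h' h
  · exact key j i h' h.symm

lemma exists_ann {R : Type*} [CommRing R] {x : R} (hx : x ≠ 0) (h : IsNilpotent x) :
    ∃ e : R, e ≠ 0 ∧ e * x = 0 := by
  obtain ⟨n, hn⟩ := h
  induction n with
  | zero =>
    exact absurd (by calc x = x * x ^ 0 := by ring
                         _ = 0 := by rw [hn, mul_zero]) hx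
  | succ n ih =>
    by_cases h0 : x ^ n = 0
    · exact ih h0
    · exact ⟨x ^ n, h0, by rw [← pow_succ]; exact hn⟩

lemma sq_ne {R : Type*} [CommRing R] {x : R} (h : IsNilpotent x) (hx2 : x ^ 2 ≠ 0) :
    x ≠ x ^ 2 := by
  intro he
  have key : ∀ n : ℕ, x ^ (n + 1) = x := by
    intro n
    induction n with
    | zero => simp
    | succ n ih => rw [pow_succ, ih, ← pow_two, ← he]
  obtain ⟨n, hn⟩ := h
  have hx0 : x = 0 := by
    calc x = x ^ (n + 1) := (key n).symm
    _ = x ^ n * x := by rw [pow_succ]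
    _ = 0 := by rw [hn, zero_mul]
  exact hx2 (by rw [hx0]; ring)

theorem stmt_5 (R₁ R₂ : Type*) [CommRing R₁] [CommRing R₂]
    [Finite R₁] [Finite R₂] [IsLocalRing R₁] [IsLocalRing R₂]
    (x₁ : R₁) (x₂ : R₂)
    (hp₁ : IsLocalRing.maximalIdeal R₁ = Ideal.span {x₁})
    (hp₂ : IsLocalRing.maximalIdeal R₂ = Ideal.span {x₂})
    (htwo : ∃ a b : R₁, a ≠ b ∧ a ∈ zdvSet R₁ ∧ b ∈ zdvSet R₁)
    (hx₂ : x₂ ^ 2 ≠ 0) :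
    romanDominationNumber (zeroDivisorGraph (R₁ × R₂)) = 4 := by
  classical
  -- Basic nonvanishing facts
  obtain ⟨a₀, b₀, -, ha₀, -⟩ := htwo
  obtain ⟨ha₀0, y₀, hy₀0, hay₀⟩ := ha₀
  have ha₀u : ¬IsUnit a₀ := fun h => hy₀0 ((h.mul_right_eq_zero).mp hay₀)
  obtain ⟨c₀, hc₀⟩ := Ideal.mem_span_singleton.mp
    (hp₁ ▸ (IsLocalRing.mem_maximalIdeal a₀).mpr ha₀u)
  have hx₁0 : x₁ ≠ 0 := fun h => ha₀0 (by rw [hc₀, h, zero_mul])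
  have hx₂0 : x₂ ≠ 0 := fun h => hx₂ (by rw [h]; ring)
  haveI : Nontrivial R₁ := nontrivial_of_ne x₁ 0 hx₁0
  haveI : Nontrivial R₂ := nontrivial_of_ne x₂ 0 hx₂0
  have hx₁u : ¬IsUnit x₁ :=
    (IsLocalRing.mem_maximalIdeal x₁).mp (hp₁ ▸ Ideal.mem_span_singleton_self x₁)
  have hx₂u : ¬IsUnit x₂ :=
    (IsLocalRing.mem_maximalIdeal x₂).mp (hp₂ ▸ Ideal.mem_span_singleton_self x₂)
  obtain ⟨e₁, he₁0, he₁⟩ := exists_ann hx₁0 (aux_nilpotent hx₁u)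
  obtain ⟨e₂, he₂0, he₂⟩ := exists_ann hx₂0 (aux_nilpotent hx₂u)
  have hsq : x₂ ≠ x₂ ^ 2 := sq_ne (aux_nilpotent hx₂u) hx₂
  have h1x : (1 : R₂) ≠ x₂ := fun h => hx₂u (h ▸ isUnit_one)
  have h1xx : (1 : R₂) ≠ x₂ ^ 2 := fun h =>
    hx₂u ((isUnit_pow_iff (two_ne_zero)).mp (h ▸ isUnit_one))
  -- annihilation of all nonunits
  have hann₁ : ∀ c : R₁, ¬IsUnit c → c * e₁ = 0 := by
    intro c hc
    obtain ⟨r, hr⟩ := Ideal.mem_span_singleton.mp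
      (hp₁ ▸ (IsLocalRing.mem_maximalIdeal c).mpr hc)
    rw [hr]; linear_combination r * he₁
  have hann₂ : ∀ c : R₂, ¬IsUnit c → c * e₂ = 0 := by
    intro c hc
    obtain ⟨r, hr⟩ := Ideal.mem_span_singleton.mp
      (hp₂ ▸ (IsLocalRing.mem_maximalIdeal c).mpr hc)
    rw [hr]; linear_combination r * he₂
  -- membership helpers
  have hzA : ∀ p : R₁ × R₂, p ≠ 0 → p.2 * e₂ = 0 → p ∈ zdvSet (R₁ × R₂) := by
    intro p hp h2
    exact ⟨hp, (0, e₂), by simp [Prod.ext_iff, he₂0],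
      by rw [Prod.ext_iff]; exact ⟨by simp, by simpa using h2⟩⟩
  have hzB : ∀ p : R₁ × R₂, p ≠ 0 → p.1 * e₁ = 0 → p ∈ zdvSet (R₁ × R₂) := by
    intro p hp h1
    exact ⟨hp, (e₁, 0), by simp [Prod.ext_iff, he₁0],
      by rw [Prod.ext_iff]; exact ⟨by simpa using h1, by simp⟩⟩
  have hchar : ∀ p : R₁ × R₂, p ∈ zdvSet (R₁ × R₂) → ¬IsUnit p.1 ∨ ¬IsUnit p.2 := by
    rintro ⟨a, b⟩ ⟨-, ⟨c, d⟩, hcd, hm⟩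
    by_contra hcon
    push_neg at hcon
    obtain ⟨hua, hub⟩ := hcon
    rw [Prod.ext_iff] at hm
    apply hcd
    rw [Prod.ext_iff]
    exact ⟨(hua.mul_right_eq_zero).mp (by simpa using hm.1),
      (hub.mul_right_eq_zero).mp (by simpa using hm.2)⟩
  -- specific vertices
  have m10 : ((1 : R₁), (0 : R₂)) ∈ zdvSet (R₁ × R₂) :=
    hzA _ (by simp [Prod.ext_iff]) (by simp)
  have m1x : ((1 : R₁), x₂) ∈ zdvSet (R₁ × R₂) :=
    hzA _ (by simp [Prod.ext_iff]) (by linear_combination he₂)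
  have m1xx : ((1 : R₁), x₂ ^ 2) ∈ zdvSet (R₁ × R₂) :=
    hzA _ (by simp [Prod.ext_iff]) (by linear_combination x₂ * he₂)
  have m01 : ((0 : R₁), (1 : R₂)) ∈ zdvSet (R₁ × R₂) :=
    hzB _ (by simp [Prod.ext_iff]) (by simp)
  have mx1 : (x₁, (1 : R₂)) ∈ zdvSet (R₁ × R₂) :=
    hzB _ (by simp [Prod.ext_iff]) (by linear_combination he₁)
  have m0x : ((0 : R₁), x₂) ∈ zdvSet (R₁ × R₂) :=
    hzA _ (by simp [Prod.ext_iff, hx₂0]) (by linear_combination he₂)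
  have m0xx : ((0 : R₁), x₂ ^ 2) ∈ zdvSet (R₁ × R₂) :=
    hzA _ (by simp [Prod.ext_iff, hx₂]) (by linear_combination x₂ * he₂)
  have m0e : ((0 : R₁), e₂) ∈ zdvSet (R₁ × R₂) :=
    ⟨by simp [Prod.ext_iff, he₂0], (0, x₂), by simp [Prod.ext_iff, hx₂0],
      by rw [Prod.ext_iff]; exact ⟨by simp, by simpa using he₂⟩⟩
  have me0 : (e₁, (0 : R₂)) ∈ zdvSet (R₁ × R₂) :=
    ⟨by simp [Prod.ext_iff, he₁0], (x₁, 0), by simp [Prod.ext_iff, hx₁0],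
      by rw [Prod.ext_iff]; exact ⟨by simpa using he₁, by simp⟩⟩
  -- coordinate extraction helpers
  have coe1 : ∀ {u w : ↥(zdvSet (R₁ × R₂))}, u = w → (u : R₁ × R₂).1 = (w : R₁ × R₂).1 := by
    intro u w h; rw [h]
  have coe2 : ∀ {u w : ↥(zdvSet (R₁ × R₂))}, u = w → (u : R₁ × R₂).2 = (w : R₁ × R₂).2 := by
    intro u w h; rw [h]
  -- KEY: every vertex has at least two distinct non-neighbours other than itself
  have key : ∀ v : ↥(zdvSet (R₁ × R₂)), ∃ u₁ u₂ : ↥(zdvSet (R₁ × R₂)),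
      u₁ ≠ u₂ ∧ u₁ ≠ v ∧ u₂ ≠ v ∧
      (u₁ : R₁ × R₂) * (v : R₁ × R₂) ≠ 0 ∧ (u₂ : R₁ × R₂) * (v : R₁ × R₂) ≠ 0 := by
    rintro ⟨⟨a, b⟩, hv⟩
    by_cases ha : a = 0
    · subst ha
      have hb0 : b ≠ 0 := fun h => hv.1 (by simp [Prod.ext_iff, h])
      by_cases hbu : IsUnit b
      · refine ⟨⟨(1, x₂), m1x⟩, ⟨(1, x₂ ^ 2), m1xx⟩, ?_, ?_, ?_, ?_, ?_⟩
        · exact fun h => hsq (coe2 h)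
        · exact fun h => one_ne_zero (coe1 h)
        · exact fun h => one_ne_zero (coe1 h)
        · intro h
          have h2 : x₂ * b = 0 := by simpa using congrArg Prod.snd h
          exact hx₂0 ((hbu.mul_left_eq_zero).mp h2)
        · intro h
          have h2 : x₂ ^ 2 * b = 0 := by simpa using congrArg Prod.snd h
          exact hx₂ ((hbu.mul_left_eq_zero).mp h2)
      · refine ⟨⟨(0, 1), m01⟩, ⟨(x₁, 1), mx1⟩, ?_, ?_, ?_, ?_, ?_⟩
        · exact fun h => hx₁0 (coe1 h).symm
        · intro h
          have h2 : (1 : R₂) = b := coe2 h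
          exact hbu (h2 ▸ isUnit_one)
        · intro h
          have h2 : (1 : R₂) = b := coe2 h
          exact hbu (h2 ▸ isUnit_one)
        · intro h
          exact hb0 (by simpa using congrArg Prod.snd h)
        · intro h
          exact hb0 (by simpa using congrArg Prod.snd h)
    · have hprod : ∀ (t : R₂) (ht : ((1 : R₁), t) ∈ zdvSet (R₁ × R₂)),
          ((⟨((1 : R₁), t), ht⟩ : ↥(zdvSet (R₁ × R₂))) : R₁ × R₂) * ((a, b) : R₁ × R₂) ≠ 0 := by
        intro t ht h
        exact ha (by simpa using congrArg Prod.fst h)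
      by_cases hb0 : b = 0
      · subst hb0
        refine ⟨⟨(1, x₂), m1x⟩, ⟨(1, x₂ ^ 2), m1xx⟩, ?_, ?_, ?_, hprod _ _, hprod _ _⟩
        · exact fun h => hsq (coe2 h)
        · exact fun h => hx₂0 (coe2 h)
        · exact fun h => hx₂ (coe2 h)
      · by_cases hbx : b = x₂
        · refine ⟨⟨(1, 0), m10⟩, ⟨(1, x₂ ^ 2), m1xx⟩, ?_, ?_, ?_, hprod _ _, hprod _ _⟩
          · intro h
            have h2 : (0 : R₂) = x₂ ^ 2 := coe2 h
            exact hx₂ h2.symm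
          · intro h
            have h2 : (0 : R₂) = b := coe2 h
            exact hb0 h2.symm
          · intro h
            have h2 : x₂ ^ 2 = b := coe2 h
            exact hsq ((h2.trans hbx).symm)
        · refine ⟨⟨(1, 0), m10⟩, ⟨(1, x₂), m1x⟩, ?_, ?_, ?_, hprod _ _, hprod _ _⟩
          · exact fun h => hx₂0 (coe2 h).symm
          · exact fun h => hb0 (coe2 h).symm
          · exact fun h => hbx (coe2 h).symm
  haveI : Fintype ↥(zdvSet (R₁ × R₂)) := Fintype.ofFinite _
  set V1 : ↥(zdvSet (R₁ × R₂)) := ⟨(e₁, 0), me0⟩ with hV1def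
  set V2 : ↥(zdvSet (R₁ × R₂)) := ⟨(0, e₂), m0e⟩ with hV2def
  have hV12 : V1 ≠ V2 := fun h => he₁0 (by simpa using coe1 h)
  set F : ↥(zdvSet (R₁ × R₂)) → Fin 3 :=
    fun v => if (v : R₁ × R₂) = (e₁, 0) ∨ (v : R₁ × R₂) = (0, e₂) then 2 else 0 with hFdef
  have hF1 : F V1 = 2 := if_pos (Or.inl rfl)
  have hF2 : F V2 = 2 := if_pos (Or.inr rfl)
  have hFdom : IsRomanDominating (zeroDivisorGraph (R₁ × R₂)) F := by
    intro u hu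
    have hcond : ¬((u : R₁ × R₂) = (e₁, 0) ∨ (u : R₁ × R₂) = (0, e₂)) := by
      intro hc
      rw [hFdef] at hu
      simp only [if_pos hc] at hu
      exact absurd hu (by decide)
    push_neg at hcond
    rcases hchar _ u.2 with h | h
    · refine ⟨V1, ⟨fun he => hcond.1 (congrArg Subtype.val he), ?_⟩, hF1⟩
      rw [Prod.ext_iff]
      exact ⟨by simpa using hann₁ _ h, by simp [hV1def]⟩
    · refine ⟨V2, ⟨fun he => hcond.2 (congrArg Subtype.val he), ?_⟩, hF2⟩
      rw [Prod.ext_iff]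
      exact ⟨by simp [hV2def], by simpa using hann₂ _ h⟩
  have hweight : ∑ᶠ v, (F v : ℕ) = 4 := by
    rw [finsum_eq_sum_of_fintype]
    have hsub : ∑ v ∈ ({V1, V2} : Finset _), (F v : ℕ) = ∑ v, (F v : ℕ) := by
      refine Finset.sum_subset (Finset.subset_univ _) ?_
      intro x _ hx
      rw [Finset.mem_insert, Finset.mem_singleton] at hx
      push_neg at hx
      have hcond : ¬((x : R₁ × R₂) = (e₁, 0) ∨ (x : R₁ × R₂) = (0, e₂)) := by
        rintro (hc | hc)
        · exact hx.1 (Subtype.ext hc)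
        · exact hx.2 (Subtype.ext hc)
      rw [hFdef]
      simp only [if_neg hcond]
      rfl
    rw [← hsub, Finset.sum_pair hV12, hF1, hF2]
    rfl
  have h4mem : 4 ∈ {w | ∃ f : ↥(zdvSet (R₁ × R₂)) → Fin 3,
      IsRomanDominating (zeroDivisorGraph (R₁ × R₂)) f ∧
      {v | f v ≠ 0}.Finite ∧ w = ∑ᶠ v, (f v : ℕ)} :=
    ⟨F, hFdom, Set.toFinite _, hweight.symm⟩
  -- lower bound
  have hval : ∀ (f : ↥(zdvSet (R₁ × R₂)) → Fin 3) u, f u ≠ 0 → 1 ≤ (f u : ℕ) := by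
    intro f u h
    have h2 : (f u).val ≠ 0 := Fin.val_ne_of_ne h
    omega
  have hlow : ∀ w ∈ {w | ∃ f : ↥(zdvSet (R₁ × R₂)) → Fin 3,
      IsRomanDominating (zeroDivisorGraph (R₁ × R₂)) f ∧
      {v | f v ≠ 0}.Finite ∧ w = ∑ᶠ v, (f v : ℕ)}, 4 ≤ w := by
    rintro w ⟨f, hRD, -, rfl⟩
    rw [finsum_eq_sum_of_fintype]
    by_cases hex : ∃ v, f v = 2
    · obtain ⟨v, hv2⟩ := hex
      have hfv : (f v : ℕ) = 2 := by rw [hv2]; rfl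
      by_cases hex2 : ∃ z, z ≠ v ∧ f z = 2
      · obtain ⟨z, hzv, hz2⟩ := hex2
        have hfz : (f z : ℕ) = 2 := by rw [hz2]; rfl
        calc (4 : ℕ) = ∑ u ∈ ({z, v} : Finset _), (f u : ℕ) := by
              rw [Finset.sum_pair hzv, hfv, hfz]
        _ ≤ ∑ u, (f u : ℕ) :=
              Finset.sum_le_sum_of_subset (Finset.subset_univ _)
      · push_neg at hex2
        obtain ⟨u₁, u₂, h12, h1v, h2v, hm1, hm2⟩ := key v
        have hf1 : f u₁ ≠ 0 := by
          intro h0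
          obtain ⟨z, hadj, hz2⟩ := hRD u₁ h0
          have hzv : z = v := by
            by_contra hc
            exact hex2 z hc hz2
          subst hzv
          exact hm1 hadj.2
        have hf2 : f u₂ ≠ 0 := by
          intro h0
          obtain ⟨z, hadj, hz2⟩ := hRD u₂ h0
          have hzv : z = v := by
            by_contra hc
            exact hex2 z hc hz2
          subst hzv
          exact hm2 hadj.2
        have hnm : v ∉ ({u₁, u₂} : Finset _) := by
          rw [Finset.mem_insert, Finset.mem_singleton]
          push_neg
          exact ⟨fun h => h1v h.symm, fun h => h2v h.symm⟩
        calc (4 : ℕ) ≤ (f v : ℕ) + ((f u₁ : ℕ) + (f u₂ : ℕ)) := by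
              have g1 := hval f u₁ hf1
              have g2 := hval f u₂ hf2
              omega
        _ = ∑ u ∈ ({v, u₁, u₂} : Finset _), (f u : ℕ) := by
              rw [Finset.sum_insert hnm, Finset.sum_pair h12]
        _ ≤ ∑ u, (f u : ℕ) :=
              Finset.sum_le_sum_of_subset (Finset.subset_univ _)
    · push_neg at hex
      have hall : ∀ u, f u ≠ 0 := by
        intro u h0
        obtain ⟨z, -, hz2⟩ := hRD u h0
        exact hex z hz2
      set A : ↥(zdvSet (R₁ × R₂)) := ⟨(1, 0), m10⟩ with hA
      set B : ↥(zdvSet (R₁ × R₂)) := ⟨(0, 1), m01⟩ with hB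
      set C : ↥(zdvSet (R₁ × R₂)) := ⟨(0, x₂), m0x⟩ with hC
      set D : ↥(zdvSet (R₁ × R₂)) := ⟨(0, x₂ ^ 2), m0xx⟩ with hD
      have hAm : A ∉ ({B, C, D} : Finset _) := by
        rw [Finset.mem_insert, Finset.mem_insert, Finset.mem_singleton]
        push_neg
        refine ⟨fun h => ?_, fun h => ?_, fun h => ?_⟩ <;>
          exact one_ne_zero (coe1 h)
      have hBm : B ∉ ({C, D} : Finset _) := by
        rw [Finset.mem_insert, Finset.mem_singleton]
        push_neg
        exact ⟨fun h => h1x (coe2 h), fun h => h1xx (coe2 h)⟩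
      have hCD : C ≠ D := fun h => hsq (coe2 h)
      calc (4 : ℕ) ≤ (f A : ℕ) + ((f B : ℕ) + ((f C : ℕ) + (f D : ℕ))) := by
            have g1 := hval f A (hall A)
            have g2 := hval f B (hall B)
            have g3 := hval f C (hall C)
            have g4 := hval f D (hall D)
            omega
      _ = ∑ u ∈ ({A, B, C, D} : Finset _), (f u : ℕ) := by
            rw [Finset.sum_insert hAm, Finset.sum_insert hBm, Finset.sum_pair hCD]
      _ ≤ ∑ u, (f u : ℕ) :=
            Finset.sum_le_sum_of_subset (Finset.subset_univ _)
  exact le_antisymm (csInf_le (OrderBot.bddBelow _) h4mem) (le_csInf ⟨4, h4mem⟩ hlow)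
end

section
/- Let R₁ and R₂ be commutative rings whose zero-divisor graphs Γ(R₁) and Γ(R₂) are finite and nonempty, with m and n vertices and maximum degrees r₁ and r₂, respectively. Then γ_R(Γ(R₁) □ Γ(R₂)) ≤ mn − r₁ − r₂ + 1. -/
/-- `r` is the maximum degree of `G` (degree measured as the `ncard` of the
neighbour set). -/
def IsMaxDegree {V : Type*} (G : SimpleGraph V) (r : ℕ) : Prop :=
  (∃ v, (G.neighborSet v).ncard = r) ∧ ∀ v, (G.neighborSet v).ncard ≤ r

theorem stmt_6 (R₁ R₂ : Type*) [CommRing R₁] [CommRing R₂] (m n r₁ r₂ : ℕ)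
    (hfin₁ : (zdvSet R₁).Finite) (hfin₂ : (zdvSet R₂).Finite)
    (hne₁ : (zdvSet R₁).Nonempty) (hne₂ : (zdvSet R₂).Nonempty)
    (hm : (zdvSet R₁).ncard = m) (hn : (zdvSet R₂).ncard = n)
    (hr₁ : IsMaxDegree (zeroDivisorGraph R₁) r₁)
    (hr₂ : IsMaxDegree (zeroDivisorGraph R₂) r₂) :
    romanDominationNumber (zeroDivisorGraph R₁ □ zeroDivisorGraph R₂)
      ≤ m * n - r₁ - r₂ + 1 := by
  classical
  have _i1 := hfin₁.to_subtype
  have _i2 := hfin₂.to_subtype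
  letI : Fintype (zdvSet R₁) := Fintype.ofFinite _
  letI : Fintype (zdvSet R₂) := Fintype.ofFinite _
  set G₁ := zeroDivisorGraph R₁ with hG₁
  set G₂ := zeroDivisorGraph R₂ with hG₂
  obtain ⟨⟨a, hadeg⟩, hdeg₁⟩ := hr₁
  obtain ⟨⟨b, hbdeg⟩, hdeg₂⟩ := hr₂
  set f : (zdvSet R₁ × zdvSet R₂) → Fin 3 := fun p =>
    if p = (a, b) then 2
    else if (G₁.Adj p.1 a ∧ p.2 = b) ∨ (p.1 = a ∧ G₂.Adj p.2 b) then 0 else 1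
    with hf
  -- value facts
  have fab : f (a, b) = 2 := by simp [hf]
  have fzero : ∀ p, p ≠ (a, b) →
      ((G₁.Adj p.1 a ∧ p.2 = b) ∨ (p.1 = a ∧ G₂.Adj p.2 b)) → f p = 0 := by
    intro p h1 h2; simp [hf, h1, h2]
  have fone : ∀ p, p ≠ (a, b) →
      ¬((G₁.Adj p.1 a ∧ p.2 = b) ∨ (p.1 = a ∧ G₂.Adj p.2 b)) → f p = 1 := by
    intro p h1 h2; simp [hf, h1, h2]
  have fchar : ∀ p, f p = 0 → p ≠ (a, b) ∧
      ((G₁.Adj p.1 a ∧ p.2 = b) ∨ (p.1 = a ∧ G₂.Adj p.2 b)) := by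
    intro p hp
    by_cases h1 : p = (a, b)
    · rw [h1, fab] at hp
      exact absurd hp (by decide)
    by_cases h2 : (G₁.Adj p.1 a ∧ p.2 = b) ∨ (p.1 = a ∧ G₂.Adj p.2 b)
    · exact ⟨h1, h2⟩
    · rw [fone p h1 h2] at hp; exact absurd hp (by decide)
  have hRDF : IsRomanDominating (G₁ □ G₂) f := by
    intro u hu
    obtain ⟨h1, h2⟩ := fchar u hu
    refine ⟨(a, b), ?_, fab⟩
    rw [SimpleGraph.boxProd_adj]
    rcases h2 with ⟨h, h'⟩ | ⟨h, h'⟩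
    · exact Or.inl ⟨h, h'⟩
    · exact Or.inr ⟨h', h⟩
  -- the zero set
  set A : Finset (zdvSet R₁) := (G₁.neighborSet a).toFinset with hA
  set B : Finset (zdvSet R₂) := (G₂.neighborSet b).toFinset with hB
  have hAcard : A.card = r₁ := by
    rw [hA, ← Set.ncard_eq_toFinset_card']; exact hadeg
  have hBcard : B.card = r₂ := by
    rw [hB, ← Set.ncard_eq_toFinset_card']; exact hbdeg
  set Z : Finset (zdvSet R₁ × zdvSet R₂) := A ×ˢ {b} ∪ {a} ×ˢ B with hZ
  have haA : a ∉ A := by simp [hA]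
  have hbB : b ∉ B := by simp [hB]
  have hZcard : Z.card = r₁ + r₂ := by
    rw [hZ, Finset.card_union_of_disjoint, Finset.card_product, Finset.card_product]
    · simp [hAcard, hBcard]
    · rw [Finset.disjoint_left]
      rintro ⟨x, y⟩ hxy hxy'
      simp only [Finset.mem_product, Finset.mem_singleton] at hxy hxy'
      exact haA (hxy'.1 ▸ hxy.1)
  have habZ : (a, b) ∉ Z := by
    simp only [hZ, Finset.mem_union, Finset.mem_product, Finset.mem_singleton]
    rintro (⟨h, -⟩ | ⟨-, h⟩)
    · exact haA h
    · exact hbB h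
  have hzZ : ∀ p ∈ Z, f p = 0 := by
    rintro ⟨x, y⟩ hp
    simp only [hZ, Finset.mem_union, Finset.mem_product, Finset.mem_singleton,
      hA, hB, Set.mem_toFinset, SimpleGraph.mem_neighborSet] at hp
    rcases hp with ⟨h, h'⟩ | ⟨h, h'⟩
    · refine fzero _ (fun he => ?_) (Or.inl ⟨h.symm, h'⟩)
      rw [Prod.mk.injEq] at he
      exact G₁.irrefl (he.1 ▸ h)
    · refine fzero _ (fun he => ?_) (Or.inr ⟨h, h'.symm⟩)
      rw [Prod.mk.injEq] at he
      exact G₂.irrefl (he.2 ▸ h')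
  -- weight computation
  have hsum : (∑ᶠ v, (f v : ℕ)) = ∑ v, (f v : ℕ) := finsum_eq_sum_of_fintype _
  have key : (∑ v, (f v : ℕ)) + (r₁ + r₂) = Fintype.card (zdvSet R₁ × zdvSet R₂) + 1 := by
    have h1 : (∑ v, (f v : ℕ)) = ∑ v ∈ Finset.univ \ Z, (f v : ℕ) := by
      rw [eq_comm]
      refine Finset.sum_subset (Finset.subset_univ _) ?_
      intro x _ hx
      simp only [Finset.mem_sdiff, Finset.mem_univ, true_and, not_not] at hx
      rw [hzZ x hx]; rfl
    have hab_mem : (a, b) ∈ Finset.univ \ Z := by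
      simp [habZ]
    have h2 : ∑ v ∈ Finset.univ \ Z, (f v : ℕ)
        = 2 + ∑ v ∈ (Finset.univ \ Z).erase (a, b), (f v : ℕ) := by
      rw [← Finset.add_sum_erase _ _ hab_mem, fab]; rfl
    have h3 : ∑ v ∈ (Finset.univ \ Z).erase (a, b), (f v : ℕ)
        = ((Finset.univ \ Z).erase (a, b)).card := by
      rw [Finset.card_eq_sum_ones]
      refine Finset.sum_congr rfl ?_
      intro x hx
      simp only [Finset.mem_erase, Finset.mem_sdiff, Finset.mem_univ, true_and] at hx
      have : f x = 1 := by
        by_cases h2' : (G₁.Adj x.1 a ∧ x.2 = b) ∨ (x.1 = a ∧ G₂.Adj x.2 b)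
        · exfalso
          have := fzero x hx.1 h2'
          exact hx.2 (by
            have hxZ : x ∈ Z := by
              rcases h2' with ⟨h, h'⟩ | ⟨h, h'⟩
              · simp only [hZ, Finset.mem_union, Finset.mem_product, Finset.mem_singleton,
                  hA, Set.mem_toFinset, SimpleGraph.mem_neighborSet]
                exact Or.inl ⟨h.symm, h'⟩
              · simp only [hZ, Finset.mem_union, Finset.mem_product, Finset.mem_singleton,
                  hB, Set.mem_toFinset, SimpleGraph.mem_neighborSet]
                exact Or.inr ⟨h, h'.symm⟩
            exact hxZ)
        · exact fone x hx.1 h2'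
      rw [this]; rfl
    have h4 : ((Finset.univ \ Z).erase (a, b)).card + 1 = (Finset.univ \ Z).card :=
      Finset.card_erase_add_one hab_mem
    have h5 : (Finset.univ \ Z).card + Z.card = Fintype.card (zdvSet R₁ × zdvSet R₂) := by
      rw [Finset.card_sdiff_of_subset (Finset.subset_univ _)]
      have := Finset.card_le_univ Z
      simp only [Finset.card_univ] at *
      omega
    rw [h1, h2, h3]
    rw [hZcard] at h5
    omega
  have hcard : Fintype.card (zdvSet R₁ × zdvSet R₂) = m * n := by
    rw [Fintype.card_prod]
    rw [← hm, ← hn, ← Nat.card_coe_set_eq, ← Nat.card_coe_set_eq,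
      Nat.card_eq_fintype_card, Nat.card_eq_fintype_card]
  have hmem : (∑ᶠ v, (f v : ℕ)) ∈ {w | ∃ g : (zdvSet R₁ × zdvSet R₂) → Fin 3,
      IsRomanDominating (G₁ □ G₂) g ∧ {v | g v ≠ 0}.Finite ∧ w = ∑ᶠ v, (g v : ℕ)} :=
    ⟨f, hRDF, Set.toFinite _, rfl⟩
  have hle : romanDominationNumber (G₁ □ G₂) ≤ ∑ᶠ v, (f v : ℕ) := Nat.sInf_le hmem
  rw [hsum] at hle
  rw [hcard] at key
  omega
end

section
/- Let n = p₁^{m₁} p₂^{m₂} ⋯ p_k^{m_k} where p₁, ..., p_k are distinct primes, m₁, ..., m_k are positive integers, and k ≥ 3. Then γ_R(Γ(ℤ_n)) = 2k. -/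
section Transport

variable {R S : Type*} [CommRing R] [CommRing S]

theorem zdv_map (e : R ≃+* S) {x : R} (hx : x ∈ zdvSet R) : e x ∈ zdvSet S := by
  obtain ⟨hx0, y, hy0, hxy⟩ := hx
  refine ⟨fun h => hx0 (e.injective (by rw [h, map_zero])), e y,
    fun h => hy0 (e.injective (by rw [h, map_zero])), ?_⟩
  rw [← map_mul, hxy, map_zero]

/-- The equivalence on nonzero zero-divisors induced by a ring isomorphism. -/
def zdvEquiv (e : R ≃+* S) : zdvSet R ≃ zdvSet S where
  toFun x := ⟨e x, zdv_map e x.2⟩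
  invFun x := ⟨e.symm x, zdv_map e.symm x.2⟩
  left_inv x := by ext; simp
  right_inv x := by ext; simp

theorem rdnSet_subset (e : R ≃+* S) :
    {w | ∃ f : zdvSet R → Fin 3, IsRomanDominating (zeroDivisorGraph R) f ∧
      {v | f v ≠ 0}.Finite ∧ w = ∑ᶠ v, (f v : ℕ)} ⊆
    {w | ∃ f : zdvSet S → Fin 3, IsRomanDominating (zeroDivisorGraph S) f ∧
      {v | f v ≠ 0}.Finite ∧ w = ∑ᶠ v, (f v : ℕ)} := by
  rintro w ⟨f, hf, hfin, rfl⟩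
  refine ⟨f ∘ (zdvEquiv e).symm, ?_, ?_, ?_⟩
  · intro u hu
    obtain ⟨v, ⟨hne, hmul⟩, hv⟩ := hf ((zdvEquiv e).symm u) hu
    refine ⟨zdvEquiv e v, ⟨?_, ?_⟩, by simpa using hv⟩
    · intro h
      exact hne (by rw [h]; ext; simp [zdvEquiv])
    · have h1 : (u : S) = e ((((zdvEquiv e).symm u : zdvSet R)) : R) := by
        simp [zdvEquiv]
      have h2 : ((zdvEquiv e v : zdvSet S) : S) = e (v : R) := rfl
      rw [h1, h2, ← map_mul, hmul, map_zero]
  · exact Set.Finite.preimage ((zdvEquiv e).symm.injective.injOn) hfin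
  · exact (finsum_comp_equiv (zdvEquiv e).symm).symm

theorem rdn_congr (e : R ≃+* S) :
    romanDominationNumber (zeroDivisorGraph R) = romanDominationNumber (zeroDivisorGraph S) := by
  unfold romanDominationNumber
  exact congrArg sInf (Set.Subset.antisymm (rdnSet_subset e) (rdnSet_subset e.symm))

end Transport

section Pi

theorem rdn_pi (k : ℕ) (hk : 3 ≤ k) (q : Fin k → ℕ) (hq2 : ∀ i, 2 ≤ q i)
    (hone : ∀ i j, i ≠ j → 3 ≤ q i ∨ 3 ≤ q j)
    (z : ∀ i, ZMod (q i)) (hz0 : ∀ i, z i ≠ 0)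
    (hz : ∀ i (x : ZMod (q i)), ¬ IsUnit x → x * z i = 0) :
    romanDominationNumber (zeroDivisorGraph (∀ i, ZMod (q i))) = 2 * k := by
  classical
  have h10 : ∀ i, (1 : ZMod (q i)) ≠ 0 := fun i => by
    haveI : Fact (1 < q i) := ⟨hq2 i⟩
    exact one_ne_zero
  have hUnz : ∀ i (x : ZMod (q i)), IsUnit x → x ≠ 0 := fun i x hx => by
    haveI : Fact (1 < q i) := ⟨hq2 i⟩
    exact hx.ne_zero
  have pick3 : ∀ i j : Fin k, ∃ l, l ≠ i ∧ l ≠ j := by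
    intro i j
    by_contra h
    push_neg at h
    have hsub : (Finset.univ : Finset (Fin k)) ⊆ {i, j} := by
      intro l _
      rcases eq_or_ne l i with rfl | hli
      · simp
      · simp [h l hli]
    have h1 := Finset.card_le_card hsub
    have h2 : ({i, j} : Finset (Fin k)).card ≤ 2 :=
      (Finset.card_insert_le _ _).trans (by simp)
    rw [Finset.card_univ, Fintype.card_fin] at h1
    omega
  have single_nz : ∀ (j : Fin k) (c : ZMod (q j)), c ≠ 0 → (Pi.single j c : ∀ i, ZMod (q i)) ≠ 0 := by
    intro j c hc h
    exact hc (by simpa using congrFun h j)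
  have vmem : ∀ i, Pi.single i (z i) ∈ zdvSet (∀ i, ZMod (q i)) := by
    intro i
    obtain ⟨l, hl, -⟩ := pick3 i i
    refine ⟨single_nz i _ (hz0 i), Pi.single l 1, single_nz l 1 (h10 l), ?_⟩
    funext j
    rcases eq_or_ne j i with rfl | hj
    · simp [Pi.single_eq_of_ne (Ne.symm hl)]
    · simp [Pi.single_eq_of_ne hj]
  set Sv : Finset (zdvSet (∀ i, ZMod (q i))) :=
    Finset.image (fun i => (⟨Pi.single i (z i), vmem i⟩ : zdvSet (∀ i, ZMod (q i)))) Finset.univ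
    with hSv
  have hvinj : Function.Injective
      (fun i => (⟨Pi.single i (z i), vmem i⟩ : zdvSet (∀ i, ZMod (q i)))) := by
    intro i j hij
    by_contra hne
    have h1 : (Pi.single i (z i) : ∀ l, ZMod (q l)) = Pi.single j (z j) := congrArg Subtype.val hij
    have := congrFun h1 i
    rw [Pi.single_eq_same, Pi.single_eq_of_ne (fun h => hne h)] at this
    exact hz0 i this
  have hSvcard : Sv.card = k := by
    rw [hSv, Finset.card_image_of_injective _ hvinj, Finset.card_univ, Fintype.card_fin]
  set f0 : zdvSet (∀ i, ZMod (q i)) → Fin 3 := fun x => if x ∈ Sv then 2 else 0 with hf0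
  have hf0mem : ∀ i, f0 ⟨Pi.single i (z i), vmem i⟩ = 2 := by
    intro i
    rw [hf0]
    simp only []
    rw [if_pos]
    exact Finset.mem_image_of_mem _ (Finset.mem_univ i)
  have hub : 2 * k ∈ {w | ∃ f : zdvSet (∀ i, ZMod (q i)) → Fin 3,
      IsRomanDominating (zeroDivisorGraph (∀ i, ZMod (q i))) f ∧
      {v | f v ≠ 0}.Finite ∧ w = ∑ᶠ v, (f v : ℕ)} := by
    refine ⟨f0, ?_, ?_, ?_⟩
    · intro u hu
      obtain ⟨hu0, y, hy0, hxy⟩ := u.2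
      have : ∃ j, y j ≠ 0 := by
        by_contra h
        push_neg at h
        exact hy0 (funext h)
      obtain ⟨j, hj⟩ := this
      have hmj : (u : ∀ i, ZMod (q i)) j * y j = 0 := congrFun hxy j
      have hnu : ¬ IsUnit ((u : ∀ i, ZMod (q i)) j) := fun hU =>
        hj ((hU.mul_right_eq_zero).mp hmj)
      refine ⟨⟨Pi.single j (z j), vmem j⟩, ⟨?_, ?_⟩, hf0mem j⟩
      · intro h
        rw [h, hf0mem j] at hu
        exact absurd hu (by decide)
      · funext l
        rcases eq_or_ne l j with rfl | hl
        · simpa using hz l _ hnu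
        · simp [Pi.single_eq_of_ne hl]
    · exact Set.Finite.subset Sv.finite_toSet (fun x hx => by
        by_contra hmem
        have hmem' : x ∉ Sv := by simpa using hmem
        exact hx (by rw [hf0]; simp only []; rw [if_neg hmem']))
    · have hsupp : (Function.support fun v => ((f0 v : ℕ))) ⊆ ↑Sv := by
        intro x hx
        by_contra hmem
        have hmem' : x ∉ Sv := by simpa using hmem
        apply hx
        show ((f0 x : Fin 3) : ℕ) = 0
        rw [hf0]
        simp only []
        rw [if_neg hmem']
        rfl
      rw [finsum_eq_sum_of_support_subset _ hsupp]
      have hconst : ∀ x ∈ Sv, ((f0 x : Fin 3) : ℕ) = 2 := fun x hx => by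
        rw [hf0]; simp only []; rw [if_pos hx]; rfl
      rw [Finset.sum_congr rfl hconst, Finset.sum_const, hSvcard, smul_eq_mul, Nat.mul_comm]
  have hlb : ∀ w ∈ {w | ∃ f : zdvSet (∀ i, ZMod (q i)) → Fin 3,
      IsRomanDominating (zeroDivisorGraph (∀ i, ZMod (q i))) f ∧
      {v | f v ≠ 0}.Finite ∧ w = ∑ᶠ v, (f v : ℕ)}, 2 * k ≤ w := by
    rintro w ⟨f, hf, hfin, rfl⟩
    have hval : ∀ c : Fin 3, (c : ℕ) ≠ 0 ↔ c ≠ 0 := by decide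
    have hfin' : (Function.support fun v => ((f v : ℕ))).Finite :=
      hfin.subset (fun v hv => (hval (f v)).mp hv)
    set s := hfin'.toFinset with hs
    have hmem_s : ∀ v, v ∈ s ↔ (f v : ℕ) ≠ 0 := fun v => hfin'.mem_toFinset
    rw [finsum_eq_sum _ hfin']
    set Dp : Fin k → zdvSet (∀ i, ZMod (q i)) → Prop :=
      fun i x => ∀ j, j ≠ i → (x : ∀ i, ZMod (q i)) j = 0 with hDp
    set Cp : Fin k → zdvSet (∀ i, ZMod (q i)) → Prop :=
      fun i x => (x : ∀ i, ZMod (q i)) i = 0 ∧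
        ∀ j, j ≠ i → IsUnit ((x : ∀ i, ZMod (q i)) j) with hCp
    set t : Fin k → Finset (zdvSet (∀ i, ZMod (q i))) :=
      fun i => s.filter (fun x => Dp i x ∨ Cp i x) with ht
    -- per-block lower bound
    have hblock : ∀ i, 2 ≤ ∑ x ∈ t i, (f x : ℕ) := by
      intro i
      obtain ⟨l1, hl1, -⟩ := pick3 i i
      obtain ⟨l2, hl2, hl21⟩ := pick3 i l1
      have hql : ∃ j0, j0 ≠ i ∧ 3 ≤ q j0 := by
        rcases hone l1 l2 (Ne.symm hl21) with h | h
        · exact ⟨l1, hl1, h⟩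
        · exact ⟨l2, hl2, h⟩
      obtain ⟨j0, hj0, hq3⟩ := hql
      haveI : Fact (2 < q j0) := ⟨hq3⟩
      set a : ∀ i, ZMod (q i) := fun j => if j = i then 0 else 1 with ha
      set b : ∀ i, ZMod (q i) := fun j => if j = i then 0 else if j = j0 then -1 else 1 with hb
      have hbu : ∀ j, j ≠ i → IsUnit (b j) := by
        intro j hj
        rw [hb]
        simp only [if_neg hj]
        rcases eq_or_ne j j0 with rfl | hjj0
        · rw [if_pos rfl]; exact isUnit_one.neg
        · rw [if_neg hjj0]; exact isUnit_one
      have hau : ∀ j, j ≠ i → IsUnit (a j) := by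
        intro j hj
        rw [ha]; simp only [if_neg hj]; exact isUnit_one
      have hzd : ∀ c : ∀ i, ZMod (q i), c i = 0 → c * Pi.single i 1 = 0 := by
        intro c hc
        funext l
        rcases eq_or_ne l i with rfl | hl
        · simpa [Pi.single_eq_same] using hc
        · simp [Pi.single_eq_of_ne hl]
      have hamem : a ∈ zdvSet (∀ i, ZMod (q i)) := by
        refine ⟨?_, Pi.single i 1, single_nz i 1 (h10 i), hzd a (by rw [ha]; simp)⟩
        intro h
        have h1 := congrFun h j0
        rw [ha] at h1
        simp [hj0] at h1
        exact h10 j0 h1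
      have hbmem : b ∈ zdvSet (∀ i, ZMod (q i)) := by
        refine ⟨?_, Pi.single i 1, single_nz i 1 (h10 i), hzd b (by rw [hb]; simp)⟩
        intro h
        have h1 := congrFun h j0
        rw [hb] at h1
        simp [hj0] at h1
        exact h10 j0 h1
      set A : zdvSet (∀ i, ZMod (q i)) := ⟨a, hamem⟩ with hA
      set B : zdvSet (∀ i, ZMod (q i)) := ⟨b, hbmem⟩ with hB
      have hAB : A ≠ B := by
        intro h
        have h1 : a = b := congrArg Subtype.val h
        have h2 := congrFun h1 j0
        rw [ha, hb] at h2
        simp [hj0] at h2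
        exact ZMod.neg_one_ne_one h2.symm
      have hCA : Cp i A := by
        refine ⟨show a i = 0 by rw [ha]; simp, hau⟩
      have hCB : Cp i B := by
        refine ⟨show b i = 0 by rw [hb]; simp, hbu⟩
      -- helper: a neighbour with value 2 lies in D i
      have hDnb : ∀ (c : ∀ i, ZMod (q i)) (hcu : ∀ j, j ≠ i → IsUnit (c j))
          (v : zdvSet (∀ i, ZMod (q i))), c * (v : ∀ i, ZMod (q i)) = 0 → Dp i v := by
        intro c hcu v hmul j hj
        have := congrFun hmul j
        exact ((hcu j hj).mul_right_eq_zero).mp this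
      rcases eq_or_ne (f A) 0 with hfA | hfA
      · obtain ⟨v, ⟨hne, hmul⟩, hv2⟩ := hf A hfA
        have hvt : v ∈ t i := by
          rw [ht, Finset.mem_filter]
          exact ⟨(hmem_s v).mpr (by rw [hv2]; decide), Or.inl (hDnb a hau v hmul)⟩
        calc 2 = ((f v : ℕ)) := by rw [hv2]; rfl
        _ ≤ ∑ x ∈ t i, (f x : ℕ) :=
          Finset.single_le_sum (f := fun x => ((f x : ℕ))) (fun _ _ => Nat.zero_le _) hvt
      · rcases eq_or_ne (f B) 0 with hfB | hfB
        · obtain ⟨v, ⟨hne, hmul⟩, hv2⟩ := hf B hfB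
          have hvt : v ∈ t i := by
            rw [ht, Finset.mem_filter]
            exact ⟨(hmem_s v).mpr (by rw [hv2]; decide), Or.inl (hDnb b hbu v hmul)⟩
          calc 2 = ((f v : ℕ)) := by rw [hv2]; rfl
          _ ≤ ∑ x ∈ t i, (f x : ℕ) :=
            Finset.single_le_sum (f := fun x => ((f x : ℕ))) (fun _ _ => Nat.zero_le _) hvt
        · have hAs : A ∈ t i := by
            rw [ht, Finset.mem_filter]
            exact ⟨(hmem_s A).mpr ((hval (f A)).mpr hfA), Or.inr hCA⟩
          have hBs : B ∈ t i := by
            rw [ht, Finset.mem_filter]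
            exact ⟨(hmem_s B).mpr ((hval (f B)).mpr hfB), Or.inr hCB⟩
          have hsub : ({A, B} : Finset (zdvSet (∀ i, ZMod (q i)))) ⊆ t i := by
            intro x hx
            rcases Finset.mem_insert.mp hx with rfl | hx
            · exact hAs
            · rw [Finset.mem_singleton.mp hx]; exact hBs
          calc 2 = 1 + 1 := rfl
          _ ≤ (f A : ℕ) + (f B : ℕ) := by
            have h1 : 1 ≤ (f A : ℕ) := Nat.one_le_iff_ne_zero.mpr ((hval (f A)).mpr hfA)
            have h2 : 1 ≤ (f B : ℕ) := Nat.one_le_iff_ne_zero.mpr ((hval (f B)).mpr hfB)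
            omega
          _ = ∑ x ∈ ({A, B} : Finset (zdvSet (∀ i, ZMod (q i)))), (f x : ℕ) :=
            (Finset.sum_pair (f := fun x => ((f x : ℕ))) hAB).symm
          _ ≤ ∑ x ∈ t i, (f x : ℕ) :=
            Finset.sum_le_sum_of_subset hsub
    -- disjointness
    have hdisj : ∀ i i', i ≠ i' → ∀ x, (Dp i x ∨ Cp i x) → (Dp i' x ∨ Cp i' x) → False := by
      intro i i' hii x hE hE'
      rcases hE with hD | hC <;> rcases hE' with hD' | hC'
      · apply x.2.1
        funext j
        rcases eq_or_ne j i with rfl | hj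
        · exact hD' j hii
        · exact hD j hj
      · obtain ⟨l, hli, hli'⟩ := pick3 i i'
        exact hUnz l _ (hC'.2 l hli') (hD l hli)
      · obtain ⟨l, hli, hli'⟩ := pick3 i i'
        exact hUnz l _ (hC.2 l hli) (hD' l hli')
      · exact hUnz i _ (hC'.2 i hii) hC.1
    have hdisjt : ((Finset.univ : Finset (Fin k)) : Set (Fin k)).PairwiseDisjoint t := by
      intro i _ i' _ hii
      rw [Function.onFun, Finset.disjoint_left]
      intro x hx hx'
      rw [ht, Finset.mem_filter] at hx hx'
      exact hdisj i i' hii x hx.2 hx'.2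
    have hle : ∑ i, ∑ x ∈ t i, (f x : ℕ) ≤ ∑ x ∈ s, (f x : ℕ) := by
      rw [← Finset.sum_biUnion hdisjt]
      refine Finset.sum_le_sum_of_subset ?_
      intro x hx
      obtain ⟨i, -, hi⟩ := Finset.mem_biUnion.mp hx
      exact (Finset.mem_filter.mp hi).1
    calc 2 * k = ∑ _i : Fin k, 2 := by simp [mul_comm]
    _ ≤ ∑ i, ∑ x ∈ t i, (f x : ℕ) := Finset.sum_le_sum (fun i _ => hblock i)
    _ ≤ ∑ x ∈ s, (f x : ℕ) := hle
  exact le_antisymm (Nat.sInf_le hub) (le_csInf ⟨_, hub⟩ hlb)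

end Pi

theorem stmt_11 (k : ℕ) (hk : 3 ≤ k) (p m : Fin k → ℕ)
    (hp : ∀ i, (p i).Prime) (hinj : Function.Injective p)
    (hm : ∀ i, 1 ≤ m i) (n : ℕ) (hn : n = ∏ i, p i ^ m i) :
    romanDominationNumber (zeroDivisorGraph (ZMod n)) = 2 * k := by
  subst hn
  have hq2 : ∀ i, 2 ≤ p i ^ m i := fun i =>
    le_trans (hp i).two_le (Nat.le_self_pow (by have := hm i; omega) _)
  have hone : ∀ i j, i ≠ j → 3 ≤ p i ^ m i ∨ 3 ≤ p j ^ m j := by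
    intro i j hij
    rcases Nat.lt_or_ge (p i ^ m i) 3 with h | h
    · right
      have hpm2 : p i ^ m i = 2 := le_antisymm (by omega) (hq2 i)
      have hdvd : p i ∣ 2 := hpm2 ▸ dvd_pow_self (p i) (by have := hm i; omega)
      have hpi : p i = 2 := ((Nat.prime_dvd_prime_iff_eq (hp i) Nat.prime_two).mp hdvd)
      have hpj : p j ≠ 2 := fun h' => hij (hinj (hpi.trans h'.symm))
      have h3 : 3 ≤ p j := by have := (hp j).two_le; omega
      exact le_trans h3 (Nat.le_self_pow (by have := hm j; omega) _)
    · exact Or.inl h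
  have hcop : Pairwise (Function.onFun Nat.Coprime fun i => p i ^ m i) := by
    intro i j hij
    exact ((Nat.coprime_primes (hp i) (hp j)).mpr (fun h => hij (hinj h))).pow _ _
  rw [rdn_congr (ZMod.prodEquivPi (fun i => p i ^ m i) hcop)]
  refine rdn_pi k hk _ hq2 hone
    (fun i => ((p i ^ (m i - 1) : ℕ) : ZMod (p i ^ m i))) ?_ ?_
  · intro i
    rw [Ne, ZMod.natCast_eq_zero_iff]
    rw [Nat.pow_dvd_pow_iff_le_right (hp i).one_lt]
    have := hm i; omega
  · intro i x hx
    haveI : NeZero (p i ^ m i) := ⟨by have := hq2 i; omega⟩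
    have hx' : ¬ Nat.Coprime x.val (p i ^ m i) := by
      intro h
      apply hx
      rw [← ZMod.natCast_zmod_val x]
      exact (ZMod.isUnit_iff_coprime _ _).mpr h
    have hdvd : p i ∣ x.val := by
      by_contra hnd
      exact hx' (Nat.Coprime.pow_right _
        (((hp i).coprime_iff_not_dvd.mpr hnd).symm))
    obtain ⟨c, hc⟩ := hdvd
    have hm1 : m i - 1 + 1 = m i := by have := hm i; omega
    have hkey : x.val * p i ^ (m i - 1) = c * p i ^ m i := by
      have hpm : p i ^ m i = p i ^ (m i - 1) * p i := by rw [← pow_succ, hm1]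
      rw [hc, hpm]
      ring
    calc x * ((p i ^ (m i - 1) : ℕ) : ZMod (p i ^ m i))
        = ((x.val * p i ^ (m i - 1) : ℕ) : ZMod (p i ^ m i)) := by
          rw [Nat.cast_mul, ZMod.natCast_zmod_val]
    _ = 0 := by rw [hkey, Nat.cast_mul, ZMod.natCast_self, mul_zero]
end

section
/- If n = p^{m} for a prime p and an integer m ≥ 2 with n > 4, or if n = 2p for an odd prime p, then γ_R(Γ(ℤ_n)) = 2. -/
/-- If there is a vertex `x` adjacent to every other vertex, and at least one other
vertex `y`, then the Roman domination number of the zero-divisor graph is `2`. -/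
lemma roman_eq_two {R : Type*} [CommRing R] (x y : zdvSet R) (hxy : x ≠ y)
    (hadj : ∀ u : zdvSet R, u ≠ x → (u : R) * (x : R) = 0) :
    romanDominationNumber (zeroDivisorGraph R) = 2 := by
  classical
  have hub : (2 : ℕ) ∈ {w | ∃ f : zdvSet R → Fin 3, IsRomanDominating (zeroDivisorGraph R) f ∧
      {v | f v ≠ 0}.Finite ∧ w = ∑ᶠ v, (f v : ℕ)} := by
    refine ⟨fun v => if v = x then 2 else 0, ?_, ?_, ?_⟩
    · intro u hu
      have hux : u ≠ x := by
        intro h; rw [h] at hu; simp at hu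
      exact ⟨x, ⟨hux, hadj u hux⟩, by simp⟩
    · apply Set.Finite.subset (Set.finite_singleton x)
      intro v hv
      by_contra hvx
      simp only [Set.mem_singleton_iff] at hvx
      simp [hvx] at hv
    · rw [finsum_eq_single _ x (fun v hv => by simp [hv])]
      simp
  refine le_antisymm (Nat.sInf_le hub) (le_csInf ⟨2, hub⟩ ?_)
  rintro w ⟨f, hf, hfin, rfl⟩
  have hsupp : (Function.support fun v => ((f v : ℕ))).Finite := by
    apply hfin.subset
    intro v hv
    simp only [Function.mem_support] at hv
    intro h0
    exact hv (by rw [h0]; rfl)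
  by_cases h2 : ∃ w0, f w0 = 2
  · obtain ⟨w0, hw0⟩ := h2
    have := single_le_finsum w0 hsupp (fun j => Nat.zero_le _)
    rw [hw0] at this
    exact this
  · push_neg at h2
    have hne0 : ∀ v, f v ≠ 0 := by
      intro v hv
      obtain ⟨v', _, hv'⟩ := hf v hv
      exact h2 v' hv'
    rw [finsum_eq_sum _ hsupp]
    have hmemx : x ∈ hsupp.toFinset := by
      simp only [Set.Finite.mem_toFinset, Function.mem_support]
      exact fin3_val_ne_zero (hne0 x)
    have hmemy : y ∈ hsupp.toFinset := by
      simp only [Set.Finite.mem_toFinset, Function.mem_support]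
      exact fin3_val_ne_zero (hne0 y)
    calc (2 : ℕ) ≤ ∑ v ∈ ({x, y} : Finset (zdvSet R)), (f v : ℕ) := by
          rw [Finset.sum_pair hxy]
          have h1 := fin3_val_ne_zero (hne0 x)
          have h2 := fin3_val_ne_zero (hne0 y)
          omega
      _ ≤ ∑ v ∈ hsupp.toFinset, (f v : ℕ) := by
          apply Finset.sum_le_sum_of_subset
          intro v hv
          simp only [Finset.mem_insert, Finset.mem_singleton] at hv
          rcases hv with rfl | rfl <;> assumption

lemma cast_ne_zero_of_lt {n a : ℕ} (h1 : 0 < a) (h2 : a < n) : (a : ZMod n) ≠ 0 := by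
  rw [Ne, ZMod.natCast_eq_zero_iff]
  intro hd
  exact absurd (Nat.le_of_dvd h1 hd) (by omega)

theorem stmt_13 (n : ℕ)
    (h : (∃ p m : ℕ, p.Prime ∧ 2 ≤ m ∧ n = p ^ m ∧ 4 < n) ∨
         (∃ p : ℕ, p.Prime ∧ Odd p ∧ n = 2 * p)) :
    romanDominationNumber (zeroDivisorGraph (ZMod n)) = 2 := by
  rcases h with ⟨p, m, hp, hm, hn, h4⟩ | ⟨p, hp, hodd, hn⟩
  · -- n = p ^ m
    obtain ⟨k, rfl⟩ : ∃ k, m = k + 2 := ⟨m - 2, by omega⟩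
    subst hn
    have hp1 : 1 < p := hp.one_lt
    haveI : NeZero (p ^ (k + 2)) := ⟨by positivity⟩
    have hpk1_lt : p ^ (k + 1) < p ^ (k + 2) := Nat.pow_lt_pow_right hp1 (by omega)
    have hp_lt : p < p ^ (k + 2) := by
      calc p = p ^ 1 := (pow_one p).symm
        _ < p ^ (k + 2) := Nat.pow_lt_pow_right hp1 (by omega)
    have hpk1_pos : 0 < p ^ (k + 1) := Nat.pow_pos (by omega)
    have hpow0 : ((p : ZMod (p ^ (k + 2)))) ^ (k + 2) = 0 := by
      have := ZMod.natCast_self (p ^ (k + 2))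
      push_cast at this
      exact this
    have hx_ne : ((p : ZMod (p ^ (k + 2)))) ^ (k + 1) ≠ 0 := by
      have := cast_ne_zero_of_lt hpk1_pos hpk1_lt
      push_cast at this
      exact this
    have hpcast_ne : (p : ZMod (p ^ (k + 2))) ≠ 0 := cast_ne_zero_of_lt (by omega) hp_lt
    have hxzd : ((p : ZMod (p ^ (k + 2)))) ^ (k + 1) ∈ zdvSet (ZMod (p ^ (k + 2))) := by
      refine ⟨hx_ne, (p : ZMod (p ^ (k + 2))), hpcast_ne, ?_⟩
      rw [← pow_succ]
      exact hpow0
    have hy_lt : p ^ (k + 1) + p < p ^ (k + 2) := by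
      have h1 : p ^ (k + 1) * p = p ^ (k + 2) := by rw [← pow_succ]
      have h2 : p ≤ p ^ (k + 1) := Nat.le_self_pow (by omega) p
      nlinarith [h4]
    have hy_ne : ((p : ZMod (p ^ (k + 2)))) ^ (k + 1) + (p : ZMod (p ^ (k + 2))) ≠ 0 := by
      have := cast_ne_zero_of_lt (by omega : 0 < p ^ (k + 1) + p) hy_lt
      push_cast at this
      exact this
    have hxx0 : ((p : ZMod (p ^ (k + 2)))) ^ (k + 1) * ((p : ZMod (p ^ (k + 2)))) ^ (k + 1)
        = 0 := by
      have h5 : ((p : ZMod (p ^ (k + 2)))) ^ (k + 1) * ((p : ZMod (p ^ (k + 2)))) ^ (k + 1)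
          = ((p : ZMod (p ^ (k + 2)))) ^ (k + 2) * ((p : ZMod (p ^ (k + 2)))) ^ k := by ring
      rw [h5, hpow0, zero_mul]
    have hyzd : ((p : ZMod (p ^ (k + 2)))) ^ (k + 1) + (p : ZMod (p ^ (k + 2)))
        ∈ zdvSet (ZMod (p ^ (k + 2))) := by
      refine ⟨hy_ne, ((p : ZMod (p ^ (k + 2)))) ^ (k + 1), hx_ne, ?_⟩
      have h6 : ((p : ZMod (p ^ (k + 2))) ^ (k + 1) + p) * (p : ZMod (p ^ (k + 2))) ^ (k + 1)
          = ((p : ZMod (p ^ (k + 2)))) ^ (k + 1) * ((p : ZMod (p ^ (k + 2)))) ^ (k + 1)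
            + ((p : ZMod (p ^ (k + 2)))) ^ (k + 2) := by ring
      rw [h6, hxx0, hpow0, add_zero]
    refine roman_eq_two ⟨_, hxzd⟩ ⟨_, hyzd⟩ ?_ ?_
    · intro heq
      have h0 : ((p : ZMod (p ^ (k + 2)))) ^ (k + 1)
          = ((p : ZMod (p ^ (k + 2)))) ^ (k + 1) + (p : ZMod (p ^ (k + 2))) :=
        congrArg Subtype.val heq
      have h1 : (p : ZMod (p ^ (k + 2))) = 0 := by
        have h2 := h0.symm
        rwa [add_eq_left] at h2
      exact hpcast_ne h1
    · rintro ⟨u, hu0, b, hb0, hub⟩ _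
      show u * ((p : ZMod (p ^ (k + 2)))) ^ (k + 1) = 0
      have ha : ((u.val : ℕ) : ZMod (p ^ (k + 2))) = u := ZMod.natCast_zmod_val u
      have hc : ((b.val : ℕ) : ZMod (p ^ (k + 2))) = b := ZMod.natCast_zmod_val b
      have hdvd : p ^ (k + 2) ∣ u.val * b.val := by
        rw [← ZMod.natCast_eq_zero_iff]
        push_cast
        rw [ha, hc]
        exact hub
      have hpa : p ∣ u.val := by
        by_contra hpa
        have hco : (p ^ (k + 2)).Coprime u.val :=
          (hp.coprime_iff_not_dvd.mpr hpa).pow_left _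
        have hdc : p ^ (k + 2) ∣ b.val := hco.dvd_of_dvd_mul_left hdvd
        have hcn : b.val < p ^ (k + 2) := ZMod.val_lt b
        have hc0 : b.val ≠ 0 := by rwa [Ne, ZMod.val_eq_zero]
        exact absurd (Nat.le_of_dvd (Nat.pos_of_ne_zero hc0) hdc) (by omega)
      obtain ⟨t, ht⟩ := hpa
      rw [← ha, ht]
      push_cast
      calc (p : ZMod (p ^ (k + 2))) * (t : ZMod (p ^ (k + 2)))
            * ((p : ZMod (p ^ (k + 2)))) ^ (k + 1)
          = ((p : ZMod (p ^ (k + 2)))) ^ (k + 2) * t := by ring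
        _ = 0 := by rw [hpow0, zero_mul]
  · -- n = 2 * p
    subst hn
    have hp3 : 3 ≤ p := by
      have h2 := hp.two_le
      obtain ⟨t, ht⟩ := hodd
      omega
    haveI : NeZero (2 * p) := ⟨by omega⟩
    have hx_ne : (p : ZMod (2 * p)) ≠ 0 := cast_ne_zero_of_lt (by omega) (by omega)
    have h2_ne : ((2 : ℕ) : ZMod (2 * p)) ≠ 0 := cast_ne_zero_of_lt (by omega) (by omega)
    have hmul0 : (p : ZMod (2 * p)) * ((2 : ℕ) : ZMod (2 * p)) = 0 := by
      rw [← Nat.cast_mul, show p * 2 = 2 * p from mul_comm p 2, ZMod.natCast_self]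
    have hxzd : (p : ZMod (2 * p)) ∈ zdvSet (ZMod (2 * p)) := ⟨hx_ne, _, h2_ne, hmul0⟩
    have hyzd : ((2 : ℕ) : ZMod (2 * p)) ∈ zdvSet (ZMod (2 * p)) :=
      ⟨h2_ne, _, hx_ne, by linear_combination hmul0⟩
    have hco2p : Nat.Coprime 2 p :=
      (Nat.prime_two.coprime_iff_not_dvd).mpr (by obtain ⟨t, ht⟩ := hodd; omega)
    refine roman_eq_two ⟨_, hxzd⟩ ⟨_, hyzd⟩ ?_ ?_
    · intro heq
      have h0 : (p : ZMod (2 * p)) = ((2 : ℕ) : ZMod (2 * p)) := congrArg Subtype.val heq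
      have h1 := congrArg ZMod.val h0
      rw [ZMod.val_cast_of_lt (by omega), ZMod.val_cast_of_lt (by omega)] at h1
      omega
    · rintro ⟨u, hu0, b, hb0, hub⟩ hux
      show u * (p : ZMod (2 * p)) = 0
      have hune : u ≠ (p : ZMod (2 * p)) := fun hh => hux (Subtype.ext hh)
      have ha : ((u.val : ℕ) : ZMod (2 * p)) = u := ZMod.natCast_zmod_val u
      have hc : ((b.val : ℕ) : ZMod (2 * p)) = b := ZMod.natCast_zmod_val b
      have ha0 : u.val ≠ 0 := by rwa [Ne, ZMod.val_eq_zero]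
      have hc0 : b.val ≠ 0 := by rwa [Ne, ZMod.val_eq_zero]
      have haln : u.val < 2 * p := ZMod.val_lt u
      have hcln : b.val < 2 * p := ZMod.val_lt b
      have hanep : u.val ≠ p := by
        intro hh
        exact hune (by rw [← ha, hh])
      have hdvd : 2 * p ∣ u.val * b.val := by
        rw [← ZMod.natCast_eq_zero_iff]
        push_cast
        rw [ha, hc]
        exact hub
      have h2a : 2 ∣ u.val := by
        by_contra h2a
        have h2dvd : 2 ∣ u.val * b.val := dvd_trans ⟨p, rfl⟩ hdvd
        have h2c : 2 ∣ b.val := (Nat.prime_two.dvd_mul.mp h2dvd).resolve_left h2a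
        by_cases hpa : p ∣ u.val
        · obtain ⟨t, htt⟩ := hpa
          rcases t with _ | _ | t
          · simp [htt] at ha0
          · exact hanep (by omega)
          · have hge : 2 * p ≤ p * (t + 1 + 1) := by nlinarith
            rw [htt] at haln
            omega
        · have hpdvd : p ∣ u.val * b.val := dvd_trans ⟨2, mul_comm 2 p⟩ hdvd
          have hpc : p ∣ b.val := (hp.dvd_mul.mp hpdvd).resolve_left hpa
          have hnb : 2 * p ∣ b.val := hco2p.mul_dvd_of_dvd_of_dvd h2c hpc
          exact absurd (Nat.le_of_dvd (Nat.pos_of_ne_zero hc0) hnb) (by omega)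
      obtain ⟨t, ht⟩ := h2a
      have h2p0 : ((2 : ℕ) : ZMod (2 * p)) * (p : ZMod (2 * p)) = 0 := by
        rw [← Nat.cast_mul, ZMod.natCast_self]
      rw [← ha, ht]
      push_cast
      push_cast at h2p0
      linear_combination (t : ZMod (2 * p)) * h2p0
end

section
/- Let R be a commutative ring with identity and let P be a prime ideal of R that is finite as a set. Then γ_R(Γ(R)) ≤ 2(|P| − 1). -/
theorem stmt_14 (R : Type*) [CommRing R] (P : Ideal R) (hP : P.IsPrime)
    (hfin : (P : Set R).Finite) :
    romanDominationNumber (zeroDivisorGraph R) ≤ 2 * ((P : Set R).ncard - 1) := by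
  classical
  set f : zdvSet R → Fin 3 := fun v => if (v : R) ∈ P then 2 else 0 with hf
  -- the support set
  set S : Set (zdvSet R) := {v | (v : R) ∈ P} with hSdef
  have hSfin : S.Finite := by
    have : S = (Subtype.val) ⁻¹' (P : Set R) := rfl
    rw [this]
    exact Set.Finite.preimage (Subtype.val_injective.injOn) hfin
  have hdom : IsRomanDominating (zeroDivisorGraph R) f := by
    intro u hu
    have hunP : (u : R) ∉ P := by
      intro h
      simp only [hf, if_pos h] at hu
      exact absurd hu (by decide)
    obtain ⟨hu0, y, hy0, hxy⟩ := u.2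
    have hyP : y ∈ P := by
      have : (u : R) * y ∈ P := by rw [hxy]; exact P.zero_mem
      rcases hP.mem_or_mem this with h | h
      · exact absurd h hunP
      · exact h
    have hyzd : y ∈ zdvSet R := ⟨hy0, ⟨u, hu0, by rw [mul_comm]; exact hxy⟩⟩
    refine ⟨⟨y, hyzd⟩, ⟨?_, hxy⟩, ?_⟩
    · intro h
      apply hunP
      rw [show (u : R) = y from congrArg Subtype.val h]
      exact hyP
    · simp only [hf, if_pos hyP]
  have hsupp : {v | f v ≠ 0} ⊆ S := by
    intro v hv
    by_contra h
    exact hv (if_neg h)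
  have hsuppfin : {v | f v ≠ 0}.Finite := hSfin.subset hsupp
  have hweight : ∑ᶠ v, ((f v : ℕ)) = 2 * S.ncard := by
    have h1 : ∑ᶠ v, ((f v : ℕ)) = ∑ v ∈ hSfin.toFinset, ((f v : ℕ)) := by
      apply finsum_eq_finset_sum_of_support_subset
      intro v hv
      simp only [Function.mem_support] at hv
      have : f v ≠ 0 := by
        intro h; apply hv; rw [h]; rfl
      simpa using hsupp this
    rw [h1]
    have h2 : ∀ v ∈ hSfin.toFinset, ((f v : ℕ)) = 2 := by
      intro v hv
      have : (v : R) ∈ P := by simpa [hSdef] using hv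
      simp [hf, this]
    rw [Finset.sum_congr rfl h2, Finset.sum_const, smul_eq_mul, mul_comm,
      Set.ncard_eq_toFinset_card S hSfin]
  have hcard : S.ncard ≤ (P : Set R).ncard - 1 := by
    have h0P : (0 : R) ∈ (P : Set R) := P.zero_mem
    have hdiff : ((P : Set R) \ {0}).ncard = (P : Set R).ncard - 1 :=
      Set.ncard_diff_singleton_of_mem h0P
    rw [← hdiff]
    exact Set.ncard_le_ncard_of_injOn (fun v : ↑(zdvSet R) => (v : R))
      (fun v hv => ⟨hv, v.2.1⟩) Subtype.val_injective.injOn (hfin.diff)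
  calc romanDominationNumber (zeroDivisorGraph R)
      ≤ ∑ᶠ v, ((f v : ℕ)) := Nat.sInf_le ⟨f, hdom, hsuppfin, rfl⟩
    _ = 2 * S.ncard := hweight
    _ ≤ 2 * ((P : Set R).ncard - 1) := by omega
end

section
/- Let R be a commutative ring with identity possessing at least one nonzero zero-divisor, such that the set Z(R) of zero-divisors of R is an ideal of R and the quotient R/Z(R) is finite with cardinality α. Then 3 ≤ γ_R(T(Γ(R))) ≤ 2α. -/
/-- The total graph `T(Γ(R))`: vertices are all elements of `R`, with distinct
`x`, `y` adjacent iff `x + y` is a zero-divisor of `R`. -/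
def totalGraph (R : Type*) [CommRing R] : SimpleGraph R where
  Adj x y := x ≠ y ∧ ∃ w, w ≠ 0 ∧ (x + y) * w = 0
  symm := by
    constructor
    rintro x y ⟨hne, w, hw, hmul⟩
    exact ⟨hne.symm, w, hw, by rwa [add_comm]⟩
  loopless := by constructor; rintro x ⟨hne, _⟩; exact hne rfl

theorem stmt_15 (R : Type*) [CommRing R]
    (hzd : ∃ x : R, x ∈ zdvSet R)
    (I : Ideal R) (hI : ∀ z : R, z ∈ I ↔ ∃ w : R, w ≠ 0 ∧ z * w = 0)
    [Finite (R ⧸ I)] (α : ℕ) (hα : α = Nat.card (R ⧸ I)) :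
    3 ≤ romanDominationNumber (totalGraph R) ∧
      romanDominationNumber (totalGraph R) ≤ 2 * α := by
  classical
  obtain ⟨x, hx0, y, hy0, hxy⟩ := hzd
  have h10 : (1 : R) ≠ 0 := by
    intro h
    exact hx0 (by calc x = x * 1 := (mul_one x).symm
      _ = 0 := by rw [h, mul_zero])
  have hx1 : x ≠ 1 := by
    intro h; apply hy0; rw [h, one_mul] at hxy; exact hxy
  have hxI : x ∈ I := (hI x).2 ⟨y, hy0, hxy⟩
  have h1I : (1 : R) ∉ I := by
    intro h
    obtain ⟨w, hw, hw0⟩ := (hI 1).1 h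
    rw [one_mul] at hw0; exact hw hw0
  -- quotient map and section
  obtain ⟨s, hs⟩ : ∃ s : R ⧸ I → R, Function.RightInverse s (Ideal.Quotient.mk I) :=
    Ideal.Quotient.mk_surjective.hasRightInverse
  have hsinj : Function.Injective s := hs.injective
  -- the RDF giving the upper bound
  set f : R → Fin 3 := fun v => if v ∈ Set.range s then 2 else 0 with hf
  have hrange : ∀ v ∈ Set.range s, f v = 2 := fun v hv => if_pos hv
  have hRDf : IsRomanDominating (totalGraph R) f := by
    intro u hu
    refine ⟨s (Ideal.Quotient.mk I (-u)), ⟨?_, ?_⟩, hrange _ ⟨_, rfl⟩⟩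
    · intro h
      rw [hrange u ⟨_, h.symm⟩] at hu
      exact absurd hu (by decide)
    · have hmem : u + s (Ideal.Quotient.mk I (-u)) ∈ I := by
        have h1 := hs (Ideal.Quotient.mk I (-u))
        have h2 : s (Ideal.Quotient.mk I (-u)) - (-u) ∈ I :=
          (Ideal.Quotient.mk_eq_mk_iff_sub_mem _ _).1 h1
        have h3 : s (Ideal.Quotient.mk I (-u)) + u ∈ I := by
          simpa [sub_neg_eq_add] using h2
        simpa [add_comm] using h3
      exact (hI _).1 hmem
  have hfinrange : (Set.range s).Finite := Set.finite_range s
  have hsupp : {v | f v ≠ 0} ⊆ Set.range s := by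
    intro v hv
    by_contra h
    exact hv (if_neg h)
  set T : Finset R := hfinrange.toFinset with hT
  have hsuppT : (Function.support fun v => ((f v : ℕ))) ⊆ ↑T := by
    intro v hv
    simp only [Function.mem_support] at hv
    have : f v ≠ 0 := by
      intro h; apply hv; rw [h]; rfl
    simpa [hT, Set.Finite.mem_toFinset] using hsupp this
  have hweight : ∑ᶠ v, ((f v : ℕ)) = 2 * α := by
    rw [finsum_eq_finset_sum_of_support_subset _ hsuppT]
    have hval : ∀ v ∈ T, ((f v : ℕ)) = 2 := by
      intro v hv
      rw [hrange v (by simpa [hT, Set.Finite.mem_toFinset] using hv)]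
      rfl
    rw [Finset.sum_congr rfl hval, Finset.sum_const, smul_eq_mul, mul_comm]
    congr 1
    rw [hα]
    have hcardeq : Nat.card (R ⧸ I) = Nat.card (Set.range s) :=
      (Nat.card_range_of_injective hsinj).symm
    rw [hcardeq, Nat.card_eq_card_finite_toFinset hfinrange]
  have hmem : 2 * α ∈ {w | ∃ f : R → Fin 3, IsRomanDominating (totalGraph R) f ∧
      {v | f v ≠ 0}.Finite ∧ w = ∑ᶠ v, (f v : ℕ)} :=
    ⟨f, hRDf, hfinrange.subset hsupp, hweight.symm⟩
  constructor
  · -- lower bound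
    apply le_csInf ⟨_, hmem⟩
    rintro w ⟨g, hRD, hfin, rfl⟩
    by_contra hlt
    push_neg at hlt
    have hle2 : ∑ᶠ v, ((g v : ℕ)) ≤ 2 := by omega
    set S : Finset R := hfin.toFinset with hS
    have hsuppS : (Function.support fun v => ((g v : ℕ))) ⊆ ↑S := by
      intro v hv
      simp only [Function.mem_support] at hv
      have hv' : g v ≠ 0 := fun h => hv (by rw [h]; rfl)
      simpa [hS, Set.Finite.mem_toFinset] using hv'
    have hsum : ∑ᶠ v, ((g v : ℕ)) = ∑ v ∈ S, ((g v : ℕ)) :=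
      finsum_eq_finset_sum_of_support_subset _ hsuppS
    by_cases h2 : ∃ a, g a = 2
    · obtain ⟨a, ha⟩ := h2
      have haS : a ∈ S := by
        simp only [hS, Set.Finite.mem_toFinset, Set.mem_setOf_eq]
        rw [ha]; decide
      have hga : ((g a : ℕ)) = 2 := by rw [ha]; rfl
      have hsplit : ((g a : ℕ)) + ∑ u ∈ S.erase a, ((g u : ℕ)) = ∑ u ∈ S, ((g u : ℕ)) :=
        Finset.add_sum_erase S (fun u => ((g u : ℕ))) haS
      have h0 : ∑ u ∈ S.erase a, ((g u : ℕ)) = 0 := by omega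
      have hzero : ∀ v, v ≠ a → g v = 0 := by
        intro v hv
        by_cases hvS : v ∈ S
        · have hv0 : ((g v : ℕ)) = 0 :=
            (Finset.sum_eq_zero_iff.1 h0) v (Finset.mem_erase.2 ⟨hv, hvS⟩)
          exact Fin.val_injective hv0
        · by_contra h
          exact hvS (by simp only [hS, Set.Finite.mem_toFinset, Set.mem_setOf_eq]; exact h)
      obtain ⟨u, hune, huI⟩ : ∃ u : R, u ≠ a ∧ u + a ∉ I := by
        by_cases hca : (1 : R) - a = a
        · refine ⟨1 + x - a, ?_, ?_⟩
          · intro h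
            apply hx0
            have h4 : (1 : R) + x - a = 1 - a := h.trans hca.symm
            have : x = (1 + x - a) - (1 - a) := by ring
            rw [this, h4, sub_self]
          · intro h
            apply h1I
            have heq : (1 + x - a) + a = 1 + x := by ring
            rw [heq] at h
            have h1e : (1 : R) = (1 + x) - x := by ring
            rw [h1e]; exact I.sub_mem h hxI
        · refine ⟨1 - a, hca, ?_⟩
          intro h
          apply h1I
          have heq : (1 - a) + a = (1 : R) := by ring
          rwa [heq] at h
      have hu0 : g u = 0 := hzero u hune
      obtain ⟨v, ⟨hne, w, hw0, hmul⟩, hv2⟩ := hRD u hu0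
      have hva : v = a := by
        by_contra h
        rw [hzero v h] at hv2; exact absurd hv2 (by decide)
      apply huI
      rw [← hva]
      exact (hI _).2 ⟨w, hw0, hmul⟩
    · push_neg at h2
      have hall : ∀ u, g u ≠ 0 := by
        intro u hu
        obtain ⟨v, _, hv2⟩ := hRD u hu
        exact h2 v hv2
      have hsubs : ({0, 1, x} : Finset R) ⊆ S := by
        intro v _
        simp only [hS, Set.Finite.mem_toFinset, Set.mem_setOf_eq]
        exact hall v
      have hcard3 : ({0, 1, x} : Finset R).card = 3 := by
        rw [Finset.card_insert_of_notMem (by simp [h10.symm, hx0, Ne.symm hx0]),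
          Finset.card_insert_of_notMem (by simp [Ne.symm hx1]), Finset.card_singleton]
      have hge : 3 ≤ ∑ v ∈ S, ((g v : ℕ)) := by
        calc 3 = ({0, 1, x} : Finset R).card * 1 := by rw [hcard3]
          _ ≤ S.card * 1 := Nat.mul_le_mul_right 1 (Finset.card_le_card hsubs)
          _ = S.card • 1 := by rw [smul_eq_mul]
          _ ≤ ∑ v ∈ S, ((g v : ℕ)) := by
            apply Finset.card_nsmul_le_sum
            intro v _
            have hv := hall v
            have : ((g v : ℕ)) ≠ 0 := fun h => hv (Fin.val_injective h)
            omega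
      omega
  · exact csInf_le (OrderBot.bddBelow _) hmem
end

section
/- For any finite simple graph G, the domination number and Roman domination number satisfy γ(G) ≤ γ_R(G) ≤ 2γ(G). -/
/-- The domination number of a graph: the minimum size of a dominating set. -/
noncomputable def dominationNumber {V : Type*} (G : SimpleGraph V) : ℕ :=
  sInf {n | ∃ S : Finset V, (∀ v, v ∉ S → ∃ u ∈ S, G.Adj v u) ∧ n = S.card}

theorem stmt_17 (V : Type*) [Fintype V] (G : SimpleGraph V) :
    dominationNumber G ≤ romanDominationNumber G ∧
      romanDominationNumber G ≤ 2 * dominationNumber G := by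
  classical
  -- nonemptiness of the Roman set
  have hRne : {w | ∃ f : V → Fin 3, IsRomanDominating G f ∧
      {v | f v ≠ 0}.Finite ∧ w = ∑ᶠ v, (f v : ℕ)}.Nonempty := by
    refine ⟨∑ᶠ v : V, ((2 : Fin 3) : ℕ), fun _ => (2 : Fin 3), ?_, Set.finite_univ.subset (Set.subset_univ _), rfl⟩
    intro u hu; simp at hu
  have hDne : {n | ∃ S : Finset V, (∀ v, v ∉ S → ∃ u ∈ S, G.Adj v u) ∧ n = S.card}.Nonempty :=
    ⟨(Finset.univ : Finset V).card, Finset.univ, fun v hv => absurd (Finset.mem_univ v) hv, rfl⟩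
  constructor
  · -- γ ≤ γ_R
    obtain ⟨f, hf, -, hw⟩ := Nat.sInf_mem hRne
    set S : Finset V := Finset.univ.filter (fun v => f v ≠ 0) with hS
    have hdom : ∀ v, v ∉ S → ∃ u ∈ S, G.Adj v u := by
      intro v hv
      simp [hS] at hv
      obtain ⟨u, hadj, hu2⟩ := hf v hv
      exact ⟨u, by simp [hS, hu2], hadj⟩
    have hcard : S.card ≤ ∑ᶠ v, (f v : ℕ) := by
      rw [finsum_eq_sum_of_fintype]
      calc S.card = ∑ v ∈ S, 1 := by simp
        _ ≤ ∑ v ∈ S, (f v : ℕ) := Finset.sum_le_sum (by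
            intro i hi
            have h0 : f i ≠ 0 := by simpa [hS] using hi
            exact Nat.one_le_iff_ne_zero.mpr fun h => h0 (Fin.ext h))
        _ ≤ ∑ v, (f v : ℕ) := by exact Finset.sum_le_sum_of_subset (Finset.subset_univ S)
    have h1 : dominationNumber G ≤ S.card := Nat.sInf_le ⟨S, hdom, rfl⟩
    have h2 : romanDominationNumber G = ∑ᶠ v, (f v : ℕ) := hw
    rw [h2]
    exact h1.trans hcard
  · -- γ_R ≤ 2γ
    obtain ⟨S, hS, hn⟩ := Nat.sInf_mem hDne
    set f : V → Fin 3 := fun v => if v ∈ S then 2 else 0 with hf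
    have hrom : IsRomanDominating G f := by
      intro u hu
      have hu' : u ∉ S := by
        by_contra h; simp [hf, h] at hu
      obtain ⟨v, hv, hadj⟩ := hS u hu'
      exact ⟨v, hadj, by simp [hf, hv]⟩
    have hwt : ∑ᶠ v, (f v : ℕ) = 2 * S.card := by
      rw [finsum_eq_sum_of_fintype]
      have : ∀ v, ((f v : ℕ)) = if v ∈ S then 2 else 0 := by
        intro v; by_cases h : v ∈ S <;> simp [hf, h]
      simp_rw [this, Finset.sum_ite_mem, Finset.univ_inter, Finset.sum_const, smul_eq_mul]
      ring
    have := Nat.sInf_le (s := {w | ∃ f : V → Fin 3, IsRomanDominating G f ∧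
      {v | f v ≠ 0}.Finite ∧ w = ∑ᶠ v, (f v : ℕ)})
      ⟨f, hrom, Set.finite_univ.subset (Set.subset_univ _), rfl⟩
    rw [hwt] at this
    have h2 : dominationNumber G = S.card := hn
    rw [h2]
    exact this
end
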